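/- arXiv:1903.12496 — 5 statements merged into one kernel-verified Lean document; each statement's English description precedes it below -/
import Mathlib

section
/- Let p ∈ (1,∞), n, N ≥ 1 and 0 < λ ≤ Λ. Suppose T₁, T₂ ∈ ℝ^{n×n} are matrices such that λ|Q| ≤ |Q Tᵢ| ≤ Λ|Q| for every Q ∈ ℝ^{N×n} and i = 1, 2. Then there exists a constant c, depending only on p, n, N, λ, Λ, such that |A_{T₁}(Q) − A_{T₂}(Q)| ≤ c |Q|^{p−1} |T₁ − T₂| for every Q ∈ ℝ^{N×n}. -/
open scoped BigOperators

/-- The Frobenius norm of a real matrix. -/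
noncomputable def frobNorm {m n : ℕ} (Q : Matrix (Fin m) (Fin n) ℝ) : ℝ :=
  Real.sqrt (∑ i, ∑ j, (Q i j) ^ 2)

/-- The `p`-Laplacian nonlinearity `A(P) = |P|^{p-2} P` (Frobenius norm). -/
noncomputable def pLapA (p : ℝ) {N n : ℕ} (P : Matrix (Fin N) (Fin n) ℝ) :
    Matrix (Fin N) (Fin n) ℝ :=
  frobNorm P ^ (p - 2) • P

/-- The transformed nonlinearity `A_T(Q) = A(Q T) Tᵗ`. -/
noncomputable def pLapAT (p : ℝ) {N n : ℕ} (T : Matrix (Fin n) (Fin n) ℝ)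
    (Q : Matrix (Fin N) (Fin n) ℝ) : Matrix (Fin N) (Fin n) ℝ :=
  pLapA p (Q * T) * T.transpose

open scoped RealInnerProductSpace

section Key
variable {E : Type*} [NormedAddCommGroup E] [InnerProductSpace ℝ E]

lemma inner_rpow_eq (p : ℝ) (x : E) : (⟪x, x⟫ : ℝ) ^ ((p-2)/2) = ‖x‖ ^ (p-2) := by
  rw [real_inner_self_eq_norm_sq, ← Real.rpow_natCast ‖x‖ 2, ← Real.rpow_mul (norm_nonneg x)]
  congr 1
  push_cast
  ring

lemma keyE (p : ℝ) (a b : E) (hb : 0 < ‖b‖) (hab : ‖a - b‖ ≤ ‖b‖ / 2) :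
    ‖‖a‖ ^ (p-2) • a - ‖b‖ ^ (p-2) • b‖ ≤
      (1 + |p - 2|) * ((‖b‖/2) ^ (p-2) + (3/2 * ‖b‖) ^ (p-2)) * ‖a - b‖ := by
  set v := a - b with hv
  set γ : ℝ → E := fun s => b + s • v with hγ
  -- norm bounds along the segment
  have hsv : ∀ s ∈ Set.Icc (0:ℝ) 1, ‖s • v‖ ≤ ‖v‖ := by
    intro s hs
    rw [norm_smul, Real.norm_eq_abs, abs_of_nonneg hs.1]
    calc s * ‖v‖ ≤ 1 * ‖v‖ := mul_le_mul_of_nonneg_right hs.2 (norm_nonneg v)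
      _ = ‖v‖ := one_mul _
  have hvb : ‖v‖ ≤ ‖b‖ / 2 := hab
  have hlow : ∀ s ∈ Set.Icc (0:ℝ) 1, ‖b‖ / 2 ≤ ‖γ s‖ := by
    intro s hs
    have h2 := hsv s hs
    have h3 : ‖b‖ - ‖s • v‖ ≤ ‖b + s • v‖ := by
      have h4 : |‖b + s • v‖ - ‖b‖| ≤ ‖s • v‖ := by
        simpa using abs_norm_sub_norm_le (b + s • v) b
      linarith [(abs_le.mp h4).1, (abs_le.mp h4).2]
    simp only [hγ]
    linarith
  have hup : ∀ s ∈ Set.Icc (0:ℝ) 1, ‖γ s‖ ≤ 3/2 * ‖b‖ := by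
    intro s hs
    have h2 := hsv s hs
    have := norm_add_le b (s • v)
    simp only [hγ]
    linarith
  have hpos : ∀ s ∈ Set.Icc (0:ℝ) 1, 0 < ‖γ s‖ := fun s hs =>
    lt_of_lt_of_le (by linarith) (hlow s hs)
  have hMbound : ∀ s ∈ Set.Icc (0:ℝ) 1,
      ‖γ s‖ ^ (p-2) ≤ (‖b‖/2) ^ (p-2) + (3/2 * ‖b‖) ^ (p-2) := by
    intro s hs
    rcases le_or_gt 0 (p-2) with hp2 | hp2
    · have h1 := Real.rpow_le_rpow (norm_nonneg (γ s)) (hup s hs) hp2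
      have h2 : (0:ℝ) ≤ (‖b‖/2) ^ (p-2) := Real.rpow_nonneg (by linarith) _
      linarith
    · have h1 := Real.rpow_le_rpow_of_nonpos (by linarith : (0:ℝ) < ‖b‖/2) (hlow s hs) hp2.le
      have h2 : (0:ℝ) ≤ (3/2 * ‖b‖) ^ (p-2) := Real.rpow_nonneg (by linarith) _
      linarith
  -- the function and its derivative
  set f : ℝ → E := fun s => (⟪γ s, γ s⟫ : ℝ) ^ ((p-2)/2) • γ s with hf
  set f' : ℝ → E := fun s =>
    (⟪γ s, γ s⟫ : ℝ) ^ ((p-2)/2) • v +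
      ((⟪γ s, v⟫ + ⟪v, γ s⟫) * ((p-2)/2) * (⟪γ s, γ s⟫ : ℝ) ^ ((p-2)/2 - 1)) • γ s
    with hf'
  have hderiv : ∀ s ∈ Set.Icc (0:ℝ) 1, HasDerivAt f (f' s) s := by
    intro s hs
    have hγd : HasDerivAt γ v s := by
      simpa [hγ] using ((hasDerivAt_id s).smul_const v).const_add b
    have hgd : HasDerivAt (fun t => (⟪γ t, γ t⟫ : ℝ)) (⟪γ s, v⟫ + ⟪v, γ s⟫) s :=
      hγd.inner ℝ hγd
    have hne : (⟪γ s, γ s⟫ : ℝ) ≠ 0 := by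
      rw [real_inner_self_eq_norm_sq]
      have := hpos s hs
      positivity
    have hcd : HasDerivAt (fun t => (⟪γ t, γ t⟫ : ℝ) ^ ((p-2)/2))
        ((⟪γ s, v⟫ + ⟪v, γ s⟫) * ((p-2)/2) * (⟪γ s, γ s⟫ : ℝ) ^ ((p-2)/2 - 1)) s :=
      hgd.rpow_const (Or.inl hne)
    have hsm : HasDerivAt f _ s := hcd.smul hγd
    simpa [hf', add_comm] using hsm
  have hbound : ∀ s ∈ Set.Ico (0:ℝ) 1,
      ‖f' s‖ ≤ (1 + |p - 2|) * ((‖b‖/2) ^ (p-2) + (3/2 * ‖b‖) ^ (p-2)) * ‖v‖ := by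
    intro s hs
    have hsI : s ∈ Set.Icc (0:ℝ) 1 := ⟨hs.1, hs.2.le⟩
    have hγpos := hpos s hsI
    have e1 : (⟪γ s, γ s⟫ : ℝ) ^ ((p-2)/2) = ‖γ s‖ ^ (p-2) := inner_rpow_eq p (γ s)
    have e2 : (⟪γ s, γ s⟫ : ℝ) ^ ((p-2)/2 - 1) = ‖γ s‖ ^ (p-4) := by
      rw [real_inner_self_eq_norm_sq, ← Real.rpow_natCast ‖γ s‖ 2,
        ← Real.rpow_mul (norm_nonneg _)]
      congr 1
      push_cast
      ring
    have hin : |⟪γ s, v⟫ + ⟪v, γ s⟫| ≤ 2 * (‖γ s‖ * ‖v‖) := by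
      have h1 := abs_real_inner_le_norm (γ s) v
      have h2 := abs_real_inner_le_norm v (γ s)
      calc |⟪γ s, v⟫ + ⟪v, γ s⟫| ≤ |⟪γ s, v⟫| + |⟪v, γ s⟫| := abs_add_le _ _
        _ ≤ ‖γ s‖ * ‖v‖ + ‖v‖ * ‖γ s‖ := add_le_add h1 h2
        _ = 2 * (‖γ s‖ * ‖v‖) := by ring
    have habs : |(p-2)/2| = |p-2| / 2 := by rw [abs_div]; norm_num
    have hterm2 : ‖((⟪γ s, v⟫ + ⟪v, γ s⟫) * ((p-2)/2) * (⟪γ s, γ s⟫ : ℝ) ^ ((p-2)/2 - 1)) • γ s‖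
        ≤ |p - 2| * ‖γ s‖ ^ (p-2) * ‖v‖ := by
      rw [norm_smul, Real.norm_eq_abs, abs_mul, abs_mul, e2,
        abs_of_nonneg (Real.rpow_nonneg (norm_nonneg _) _), habs]
      have key : ‖γ s‖ ^ (p-4) * ‖γ s‖ * ‖γ s‖ = ‖γ s‖ ^ (p-2) := by
        rw [show p - 2 = p - 4 + 1 + 1 by ring, Real.rpow_add hγpos, Real.rpow_add hγpos,
          Real.rpow_one]
      calc |⟪γ s, v⟫ + ⟪v, γ s⟫| * (|p-2|/2) * ‖γ s‖ ^ (p-4) * ‖γ s‖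
          ≤ (2 * (‖γ s‖ * ‖v‖)) * (|p-2|/2) * ‖γ s‖ ^ (p-4) * ‖γ s‖ := by
            exact mul_le_mul_of_nonneg_right (mul_le_mul_of_nonneg_right
              (mul_le_mul_of_nonneg_right hin (by positivity)) (by positivity)) (by positivity)
        _ = |p-2| * (‖γ s‖ ^ (p-4) * ‖γ s‖ * ‖γ s‖) * ‖v‖ := by ring
        _ = |p-2| * ‖γ s‖ ^ (p-2) * ‖v‖ := by rw [key]
    have hterm1 : ‖(⟪γ s, γ s⟫ : ℝ) ^ ((p-2)/2) • v‖ ≤ ‖γ s‖ ^ (p-2) * ‖v‖ := by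
      rw [norm_smul, Real.norm_eq_abs, e1, abs_of_nonneg (Real.rpow_nonneg (norm_nonneg _) _)]
    have hMb := hMbound s hsI
    calc ‖f' s‖ ≤ ‖(⟪γ s, γ s⟫ : ℝ) ^ ((p-2)/2) • v‖
          + ‖((⟪γ s, v⟫ + ⟪v, γ s⟫) * ((p-2)/2) * (⟪γ s, γ s⟫ : ℝ) ^ ((p-2)/2 - 1)) • γ s‖ :=
            norm_add_le _ _
      _ ≤ ‖γ s‖ ^ (p-2) * ‖v‖ + |p-2| * ‖γ s‖ ^ (p-2) * ‖v‖ := add_le_add hterm1 hterm2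
      _ = (1 + |p-2|) * ‖γ s‖ ^ (p-2) * ‖v‖ := by ring
      _ ≤ (1 + |p-2|) * ((‖b‖/2) ^ (p-2) + (3/2 * ‖b‖) ^ (p-2)) * ‖v‖ :=
          mul_le_mul_of_nonneg_right
            (mul_le_mul_of_nonneg_left hMb (by positivity)) (norm_nonneg v)
  have hfin := norm_image_sub_le_of_norm_deriv_le_segment_01'
    (fun s hs => (hderiv s hs).hasDerivWithinAt) hbound
  have hf1 : f 1 = ‖a‖ ^ (p-2) • a := by
    have hγ1 : γ 1 = a := by simp [hγ, hv]
    rw [hf]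
    simp only [hγ1, inner_rpow_eq]
  have hf0 : f 0 = ‖b‖ ^ (p-2) • b := by
    have hγ0 : γ 0 = b := by simp [hγ]
    rw [hf]
    simp only [hγ0, inner_rpow_eq]
  rw [hf1, hf0] at hfin
  exact hfin

end Key

noncomputable def toE {m n : ℕ} (Q : Matrix (Fin m) (Fin n) ℝ) :
    PiLp 2 (fun _ : Fin m => PiLp 2 (fun _ : Fin n => ℝ)) :=
  (WithLp.equiv 2 _).symm (fun i => (WithLp.equiv 2 _).symm (Q i))

lemma toE_sub {m n : ℕ} (A B : Matrix (Fin m) (Fin n) ℝ) : toE (A - B) = toE A - toE B := rfl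

lemma toE_smul {m n : ℕ} (c : ℝ) (A : Matrix (Fin m) (Fin n) ℝ) : toE (c • A) = c • toE A := rfl

lemma frobNorm_eq {m n : ℕ} (Q : Matrix (Fin m) (Fin n) ℝ) : frobNorm Q = ‖toE Q‖ := by
  rw [frobNorm, PiLp.norm_eq_of_L2]
  congr 1
  apply Finset.sum_congr rfl
  intro i _
  rw [PiLp.norm_eq_of_L2, Real.sq_sqrt (by positivity)]
  apply Finset.sum_congr rfl
  intro j _
  rw [Real.norm_eq_abs, sq_abs]
  rfl

lemma frobNorm_nonneg {m n : ℕ} (Q : Matrix (Fin m) (Fin n) ℝ) : 0 ≤ frobNorm Q :=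
  Real.sqrt_nonneg _

lemma frobNorm_zero {m n : ℕ} : frobNorm (0 : Matrix (Fin m) (Fin n) ℝ) = 0 := by
  simp [frobNorm]

lemma frobNorm_pos {m n : ℕ} {Q : Matrix (Fin m) (Fin n) ℝ} (h : Q ≠ 0) : 0 < frobNorm Q := by
  rw [frobNorm_eq, norm_pos_iff]
  intro hz
  apply h
  funext i j
  have := congrArg (fun x => (x i) j) hz
  simpa [toE] using this

lemma frobNorm_add_le {m n : ℕ} (A B : Matrix (Fin m) (Fin n) ℝ) :
    frobNorm (A + B) ≤ frobNorm A + frobNorm B := by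
  rw [frobNorm_eq, frobNorm_eq, frobNorm_eq]
  exact norm_add_le (toE A) (toE B)

lemma frobNorm_sub_le {m n : ℕ} (A B : Matrix (Fin m) (Fin n) ℝ) :
    frobNorm (A - B) ≤ frobNorm A + frobNorm B := by
  rw [frobNorm_eq, frobNorm_eq, frobNorm_eq]
  exact norm_sub_le (toE A) (toE B)

section FrobInstance
attribute [local instance] Matrix.frobeniusSeminormedAddCommGroup

lemma frobNorm_eq_norm {m n : ℕ} (Q : Matrix (Fin m) (Fin n) ℝ) : frobNorm Q = ‖Q‖ := by
  rw [Matrix.frobenius_norm_def, frobNorm, Real.sqrt_eq_rpow]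
  congr 1
  apply Finset.sum_congr rfl
  intro i _
  apply Finset.sum_congr rfl
  intro j _
  rw [show ((2:ℝ)) = ((2:ℕ):ℝ) by norm_num, Real.rpow_natCast, Real.norm_eq_abs, sq_abs]

lemma frobNorm_mul_le {m k l : ℕ} (A : Matrix (Fin m) (Fin k) ℝ) (B : Matrix (Fin k) (Fin l) ℝ) :
    frobNorm (A * B) ≤ frobNorm A * frobNorm B := by
  rw [frobNorm_eq_norm, frobNorm_eq_norm, frobNorm_eq_norm]
  exact Matrix.frobenius_norm_mul A B

lemma frobNorm_transpose {m k : ℕ} (A : Matrix (Fin m) (Fin k) ℝ) :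
    frobNorm A.transpose = frobNorm A := by
  rw [frobNorm_eq_norm, frobNorm_eq_norm]
  exact Matrix.frobenius_norm_transpose A

end FrobInstance

lemma frob_T_bound {n N : ℕ} (hN : 0 < N) (Lam : ℝ) (hL : 0 ≤ Lam)
    (T : Matrix (Fin n) (Fin n) ℝ)
    (h : ∀ Q : Matrix (Fin N) (Fin n) ℝ, frobNorm (Q * T) ≤ Lam * frobNorm Q) :
    frobNorm T ≤ Real.sqrt n * Lam := by
  have row : ∀ j : Fin n, ∑ k, (T j k)^2 ≤ Lam^2 := by
    intro j
    set i0 : Fin N := ⟨0, hN⟩ with hi0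
    set Q : Matrix (Fin N) (Fin n) ℝ :=
      Matrix.of (fun i k => (if i = i0 then (1:ℝ) else 0) * (if k = j then 1 else 0)) with hQ
    have hQsq : ∀ i k, (Q i k)^2 = (if i = i0 then (1:ℝ) else 0) * (if k = j then 1 else 0) := by
      intro i k
      rw [hQ]
      simp only [Matrix.of_apply]
      split_ifs <;> norm_num
    have hfQ : frobNorm Q = 1 := by
      rw [frobNorm]
      simp only [hQsq]
      rw [← Finset.sum_mul_sum]
      simp [Finset.sum_ite_eq']
    have hmul : ∀ (i : Fin N) (k : Fin n),
        (Q * T) i k = (if i = i0 then (1:ℝ) else 0) * T j k := by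
      intro i k
      rw [Matrix.mul_apply]
      have step : ∀ l : Fin n, Q i l * T l k
          = (if i = i0 then (1:ℝ) else 0) * (if l = j then T l k else 0) := by
        intro l
        rw [hQ]
        simp only [Matrix.of_apply]
        split_ifs <;> ring
      rw [Finset.sum_congr rfl (fun l _ => step l), ← Finset.mul_sum]
      congr 1
      simp [Finset.sum_ite_eq']
    have hfQT : frobNorm (Q * T) = Real.sqrt (∑ k, (T j k)^2) := by
      rw [frobNorm]
      congr 1
      have hsq : ∀ i k, ((Q * T) i k)^2
          = (if i = i0 then (1:ℝ) else 0) * (T j k)^2 := by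
        intro i k
        rw [hmul]
        split_ifs <;> ring
      simp only [hsq]
      rw [← Finset.sum_mul_sum]
      simp [Finset.sum_ite_eq']
    have hb := h Q
    rw [hfQ, hfQT, mul_one] at hb
    have hnn : (0:ℝ) ≤ ∑ k, (T j k)^2 := by positivity
    nlinarith [Real.sq_sqrt hnn, Real.sqrt_nonneg (∑ k, (T j k)^2)]
  rw [frobNorm]
  have hsum : ∑ j, ∑ k, (T j k)^2 ≤ (n : ℝ) * Lam^2 := by
    calc ∑ j, ∑ k, (T j k)^2 ≤ ∑ _j : Fin n, Lam^2 := Finset.sum_le_sum (fun j _ => row j)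
      _ = (n : ℝ) * Lam^2 := by simp [Finset.sum_const, Finset.card_univ, nsmul_eq_mul]
  calc Real.sqrt (∑ j, ∑ k, (T j k)^2) ≤ Real.sqrt ((n:ℝ) * Lam^2) := Real.sqrt_le_sqrt hsum
    _ = Real.sqrt n * Lam := by
        rw [Real.sqrt_mul (by positivity), Real.sqrt_sq hL]

lemma frobNorm_smul {m n : ℕ} (c : ℝ) (A : Matrix (Fin m) (Fin n) ℝ) :
    frobNorm (c • A) = |c| * frobNorm A := by
  rw [frobNorm_eq, toE_smul, norm_smul, Real.norm_eq_abs, frobNorm_eq]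

lemma frobNorm_pLapA (p : ℝ) (hp : 1 < p) {N n : ℕ} (P : Matrix (Fin N) (Fin n) ℝ) :
    frobNorm (pLapA p P) = frobNorm P ^ (p - 1) := by
  rw [pLapA, frobNorm_smul, abs_of_nonneg (Real.rpow_nonneg (frobNorm_nonneg P) _)]
  by_cases hP : P = 0
  · subst hP
    rw [frobNorm_zero, mul_zero, Real.zero_rpow (by linarith)]
  · rw [show p - 1 = p - 2 + 1 by ring, Real.rpow_add (frobNorm_pos hP), Real.rpow_one]

lemma toE_pLapA (p : ℝ) {N n : ℕ} (P : Matrix (Fin N) (Fin n) ℝ) :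
    toE (pLapA p P) = ‖toE P‖ ^ (p - 2) • toE P := by
  rw [pLapA, toE_smul, frobNorm_eq]

set_option maxHeartbeats 2000000 in
theorem stmt0 (p : ℝ) (hp : 1 < p) (n N : ℕ) (hn : 1 ≤ n) (hN : 1 ≤ N)
    (lam Lam : ℝ) (hlam : 0 < lam) (hlamLam : lam ≤ Lam) :
    ∃ c : ℝ, 0 < c ∧
      ∀ T₁ T₂ : Matrix (Fin n) (Fin n) ℝ,
        (∀ Q : Matrix (Fin N) (Fin n) ℝ,
          lam * frobNorm Q ≤ frobNorm (Q * T₁) ∧ frobNorm (Q * T₁) ≤ Lam * frobNorm Q) →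
        (∀ Q : Matrix (Fin N) (Fin n) ℝ,
          lam * frobNorm Q ≤ frobNorm (Q * T₂) ∧ frobNorm (Q * T₂) ≤ Lam * frobNorm Q) →
        ∀ Q : Matrix (Fin N) (Fin n) ℝ,
          frobNorm (pLapAT p T₁ Q - pLapAT p T₂ Q)
            ≤ c * frobNorm Q ^ (p - 1) * frobNorm (T₁ - T₂) := by
  have hL0 : 0 < Lam := lt_of_lt_of_le hlam hlamLam
  have hsn : 0 < Real.sqrt n :=
    Real.sqrt_pos.mpr (by exact_mod_cast Nat.lt_of_lt_of_le Nat.zero_lt_one hn)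
  set sn : ℝ := Real.sqrt n with hsn'
  set K0 : ℝ := (lam/2) ^ (p-2) + (Lam/2) ^ (p-2) + (3/2*lam) ^ (p-2) + (3/2*Lam) ^ (p-2)
    with hK0'
  have hK0 : 0 < K0 := by
    have h1 := Real.rpow_pos_of_pos (show (0:ℝ) < lam/2 by linarith) (p-2)
    have h2 := Real.rpow_pos_of_pos (show (0:ℝ) < Lam/2 by linarith) (p-2)
    have h3 := Real.rpow_pos_of_pos (show (0:ℝ) < 3/2*lam by linarith) (p-2)
    have h4 := Real.rpow_pos_of_pos (show (0:ℝ) < 3/2*Lam by linarith) (p-2)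
    rw [hK0']; linarith
  have hLp : 0 < Lam ^ (p-1) := Real.rpow_pos_of_pos hL0 _
  have habs0 : (0:ℝ) < 1 + |p-2| := by positivity
  set c : ℝ := Lam ^ (p-1) + (1 + |p-2|) * K0 * sn * Lam + 4 * sn * Lam ^ (p-1) * Lam / lam
    with hc'
  have hcoef : 0 ≤ 4 * sn * Lam ^ (p-1) * Lam / lam :=
    le_of_lt (div_pos (mul_pos (mul_pos (mul_pos (by norm_num) hsn) hLp) hL0) hlam)
  have hmid : 0 < (1 + |p-2|) * K0 * sn * Lam :=
    mul_pos (mul_pos (mul_pos habs0 hK0) hsn) hL0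
  have hc : 0 < c := by rw [hc']; linarith
  refine ⟨c, hc, ?_⟩
  intro T₁ T₂ h1 h2 Q
  by_cases hQ : Q = 0
  · subst hQ
    have hz : ∀ T : Matrix (Fin n) (Fin n) ℝ,
        pLapAT p T (0 : Matrix (Fin N) (Fin n) ℝ) = 0 := by
      intro T
      rw [pLapAT, Matrix.zero_mul, pLapA, smul_zero, Matrix.zero_mul]
    rw [hz, hz, sub_zero, frobNorm_zero,
      Real.zero_rpow (show p - 1 ≠ 0 by linarith), mul_zero, zero_mul]
  · have hq0 : 0 < frobNorm Q := frobNorm_pos hQ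
    set qn : ℝ := frobNorm Q with hqn'
    set D : ℝ := frobNorm (T₁ - T₂) with hD'
    have hD0 : 0 ≤ D := frobNorm_nonneg _
    have hqp : 0 < qn ^ (p-1) := Real.rpow_pos_of_pos hq0 _
    have hsnL : (0:ℝ) ≤ sn * Lam := le_of_lt (mul_pos hsn hL0)
    have hT2b : frobNorm T₂ ≤ sn * Lam :=
      frob_T_bound (by omega) Lam hL0.le T₂ (fun R => (h2 R).2)
    have hdec : pLapAT p T₁ Q - pLapAT p T₂ Q
        = pLapA p (Q * T₁) * (T₁ - T₂).transpose
          + (pLapA p (Q * T₁) - pLapA p (Q * T₂)) * T₂.transpose := by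
      rw [pLapAT, pLapAT, Matrix.transpose_sub, Matrix.mul_sub, Matrix.sub_mul]
      abel
    have hA1 : frobNorm (pLapA p (Q * T₁)) ≤ Lam ^ (p-1) * qn ^ (p-1) := by
      rw [frobNorm_pLapA p hp]
      calc frobNorm (Q * T₁) ^ (p-1) ≤ (Lam * qn) ^ (p-1) :=
            Real.rpow_le_rpow (frobNorm_nonneg _) (h1 Q).2 (by linarith)
        _ = Lam ^ (p-1) * qn ^ (p-1) := Real.mul_rpow hL0.le (frobNorm_nonneg _)
    have hA2 : frobNorm (pLapA p (Q * T₂)) ≤ Lam ^ (p-1) * qn ^ (p-1) := by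
      rw [frobNorm_pLapA p hp]
      calc frobNorm (Q * T₂) ^ (p-1) ≤ (Lam * qn) ^ (p-1) :=
            Real.rpow_le_rpow (frobNorm_nonneg _) (h2 Q).2 (by linarith)
        _ = Lam ^ (p-1) * qn ^ (p-1) := Real.mul_rpow hL0.le (frobNorm_nonneg _)
    set X : ℝ := frobNorm (pLapA p (Q * T₁) - pLapA p (Q * T₂)) with hX'
    have hX0 : 0 ≤ X := frobNorm_nonneg _
    have hLHS : frobNorm (pLapAT p T₁ Q - pLapAT p T₂ Q)
        ≤ Lam ^ (p-1) * qn ^ (p-1) * D + X * (sn * Lam) := by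
      rw [hdec]
      have t1 : frobNorm (pLapA p (Q * T₁) * (T₁ - T₂).transpose)
          ≤ Lam ^ (p-1) * qn ^ (p-1) * D := by
        calc frobNorm (pLapA p (Q * T₁) * (T₁ - T₂).transpose)
            ≤ frobNorm (pLapA p (Q * T₁)) * frobNorm (T₁ - T₂).transpose :=
              frobNorm_mul_le _ _
          _ = frobNorm (pLapA p (Q * T₁)) * D := by rw [frobNorm_transpose]
          _ ≤ Lam ^ (p-1) * qn ^ (p-1) * D := mul_le_mul_of_nonneg_right hA1 hD0
      have t2 : frobNorm ((pLapA p (Q * T₁) - pLapA p (Q * T₂)) * T₂.transpose)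
          ≤ X * (sn * Lam) := by
        calc frobNorm ((pLapA p (Q * T₁) - pLapA p (Q * T₂)) * T₂.transpose)
            ≤ X * frobNorm T₂.transpose := frobNorm_mul_le _ _
          _ = X * frobNorm T₂ := by rw [frobNorm_transpose]
          _ ≤ X * (sn * Lam) := mul_le_mul_of_nonneg_left hT2b hX0
      calc frobNorm (pLapA p (Q * T₁) * (T₁ - T₂).transpose
              + (pLapA p (Q * T₁) - pLapA p (Q * T₂)) * T₂.transpose)
          ≤ frobNorm (pLapA p (Q * T₁) * (T₁ - T₂).transpose)
            + frobNorm ((pLapA p (Q * T₁) - pLapA p (Q * T₂)) * T₂.transpose) :=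
            frobNorm_add_le _ _
        _ ≤ Lam ^ (p-1) * qn ^ (p-1) * D + X * (sn * Lam) := add_le_add t1 t2
    rcases le_or_gt (qn * D) (lam * qn / 2) with hcase | hcase
    · -- close case: use keyE
      set a := toE (Q * T₁) with ha'
      set b := toE (Q * T₂) with hb'
      have hbl : lam * qn ≤ ‖b‖ := by rw [hb', ← frobNorm_eq]; exact (h2 Q).1
      have hbu : ‖b‖ ≤ Lam * qn := by rw [hb', ← frobNorm_eq]; exact (h2 Q).2
      have hbpos : 0 < ‖b‖ := lt_of_lt_of_le (mul_pos hlam hq0) hbl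
      have hab_eq : ‖a - b‖ = frobNorm (Q * (T₁ - T₂)) := by
        rw [ha', hb', ← toE_sub, ← frobNorm_eq, Matrix.mul_sub]
      have habD : ‖a - b‖ ≤ qn * D := by
        rw [hab_eq]
        exact frobNorm_mul_le Q (T₁ - T₂)
      have hab : ‖a - b‖ ≤ ‖b‖ / 2 := by
        calc ‖a - b‖ ≤ qn * D := habD
          _ ≤ lam * qn / 2 := hcase
          _ ≤ ‖b‖ / 2 := by linarith
      have hXeq : X = ‖‖a‖ ^ (p-2) • a - ‖b‖ ^ (p-2) • b‖ := by
        rw [hX', frobNorm_eq, toE_sub, toE_pLapA, toE_pLapA]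
      have hkey := keyE p a b hbpos hab
      have hqp2 : (0:ℝ) ≤ qn ^ (p-2) := Real.rpow_nonneg hq0.le _
      have hM : (‖b‖/2) ^ (p-2) + (3/2 * ‖b‖) ^ (p-2) ≤ K0 * qn ^ (p-2) := by
        have e1 : ((lam/2) * qn) ^ (p-2) = (lam/2) ^ (p-2) * qn ^ (p-2) :=
          Real.mul_rpow (by linarith) hq0.le
        have e2 : ((Lam/2) * qn) ^ (p-2) = (Lam/2) ^ (p-2) * qn ^ (p-2) :=
          Real.mul_rpow (by linarith) hq0.le
        have e3 : ((3/2*lam) * qn) ^ (p-2) = (3/2*lam) ^ (p-2) * qn ^ (p-2) :=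
          Real.mul_rpow (by linarith) hq0.le
        have e4 : ((3/2*Lam) * qn) ^ (p-2) = (3/2*Lam) ^ (p-2) * qn ^ (p-2) :=
          Real.mul_rpow (by linarith) hq0.le
        have r1 : (0:ℝ) ≤ (lam/2) ^ (p-2) * qn ^ (p-2) :=
          mul_nonneg (Real.rpow_nonneg (by linarith) _) hqp2
        have r2 : (0:ℝ) ≤ (Lam/2) ^ (p-2) * qn ^ (p-2) :=
          mul_nonneg (Real.rpow_nonneg (by linarith) _) hqp2
        have r3 : (0:ℝ) ≤ (3/2*lam) ^ (p-2) * qn ^ (p-2) :=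
          mul_nonneg (Real.rpow_nonneg (by linarith) _) hqp2
        have r4 : (0:ℝ) ≤ (3/2*Lam) ^ (p-2) * qn ^ (p-2) :=
          mul_nonneg (Real.rpow_nonneg (by linarith) _) hqp2
        have term1 : (‖b‖/2) ^ (p-2)
            ≤ (lam/2) ^ (p-2) * qn ^ (p-2) + (Lam/2) ^ (p-2) * qn ^ (p-2) := by
          rcases le_or_gt 0 (p-2) with hsgn | hsgn
          · have h := Real.rpow_le_rpow (by linarith : (0:ℝ) ≤ ‖b‖/2)
              (by linarith : ‖b‖/2 ≤ (Lam/2) * qn) hsgn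
            rw [e2] at h; linarith
          · have h := Real.rpow_le_rpow_of_nonpos
              (mul_pos (by linarith : (0:ℝ) < lam/2) hq0)
              (by linarith : (lam/2) * qn ≤ ‖b‖/2) hsgn.le
            rw [e1] at h; linarith
        have term2 : (3/2 * ‖b‖) ^ (p-2)
            ≤ (3/2*lam) ^ (p-2) * qn ^ (p-2) + (3/2*Lam) ^ (p-2) * qn ^ (p-2) := by
          rcases le_or_gt 0 (p-2) with hsgn | hsgn
          · have h := Real.rpow_le_rpow (by linarith : (0:ℝ) ≤ 3/2 * ‖b‖)
              (by linarith : 3/2 * ‖b‖ ≤ (3/2*Lam) * qn) hsgn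
            rw [e4] at h; linarith
          · have h := Real.rpow_le_rpow_of_nonpos
              (mul_pos (by linarith : (0:ℝ) < 3/2*lam) hq0)
              (by linarith : (3/2*lam) * qn ≤ 3/2 * ‖b‖) hsgn.le
            rw [e3] at h; linarith
        have expand : K0 * qn ^ (p-2)
            = (lam/2) ^ (p-2) * qn ^ (p-2) + (Lam/2) ^ (p-2) * qn ^ (p-2)
              + (3/2*lam) ^ (p-2) * qn ^ (p-2) + (3/2*Lam) ^ (p-2) * qn ^ (p-2) := by
          rw [hK0']; ring
        rw [expand]; linarith
      have hqq : qn ^ (p-2) * qn = qn ^ (p-1) := by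
        rw [show p - 1 = p - 2 + 1 by ring, Real.rpow_add hq0, Real.rpow_one]
      have hXb : X ≤ (1 + |p-2|) * K0 * qn ^ (p-1) * D := by
        rw [hXeq]
        calc ‖‖a‖ ^ (p-2) • a - ‖b‖ ^ (p-2) • b‖
            ≤ (1 + |p - 2|) * ((‖b‖/2) ^ (p-2) + (3/2 * ‖b‖) ^ (p-2)) * ‖a - b‖ := hkey
          _ ≤ (1 + |p - 2|) * (K0 * qn ^ (p-2)) * (qn * D) := by
              apply mul_le_mul
              · exact mul_le_mul_of_nonneg_left hM habs0.le
              · exact habD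
              · exact norm_nonneg _
              · exact mul_nonneg habs0.le (mul_nonneg hK0.le hqp2)
          _ = (1 + |p-2|) * K0 * qn ^ (p-1) * D := by
              rw [← hqq]; ring
      calc frobNorm (pLapAT p T₁ Q - pLapAT p T₂ Q)
          ≤ Lam ^ (p-1) * qn ^ (p-1) * D + X * (sn * Lam) := hLHS
        _ ≤ Lam ^ (p-1) * qn ^ (p-1) * D
            + ((1 + |p-2|) * K0 * qn ^ (p-1) * D) * (sn * Lam) :=
            add_le_add_right (mul_le_mul_of_nonneg_right hXb hsnL) _
        _ = (Lam ^ (p-1) + (1 + |p-2|) * K0 * sn * Lam) * qn ^ (p-1) * D := by ring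
        _ ≤ c * qn ^ (p-1) * D := by
            apply mul_le_mul_of_nonneg_right _ hD0
            apply mul_le_mul_of_nonneg_right _ hqp.le
            rw [hc']; linarith
    · -- far case: D > lam / 2
      have hDlam : lam / 2 < D := by
        have h := (mul_lt_mul_iff_right₀ hq0).mp (by linarith : qn * (lam / 2) < qn * D)
        linarith
      have hXb : X ≤ 2 * (Lam ^ (p-1) * qn ^ (p-1)) := by
        rw [hX']
        calc frobNorm (pLapA p (Q * T₁) - pLapA p (Q * T₂))
            ≤ frobNorm (pLapA p (Q * T₁)) + frobNorm (pLapA p (Q * T₂)) := frobNorm_sub_le _ _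
          _ ≤ 2 * (Lam ^ (p-1) * qn ^ (p-1)) := by linarith
      have hfar : 2 * (Lam ^ (p-1) * qn ^ (p-1)) * (sn * Lam)
          ≤ 4 * sn * Lam ^ (p-1) * Lam / lam * (qn ^ (p-1) * D) := by
        have h5 : qn ^ (p-1) * (lam/2) ≤ qn ^ (p-1) * D :=
          mul_le_mul_of_nonneg_left hDlam.le hqp.le
        calc 2 * (Lam ^ (p-1) * qn ^ (p-1)) * (sn * Lam)
            = 4 * sn * Lam ^ (p-1) * Lam / lam * (qn ^ (p-1) * (lam/2)) := by
              field_simp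
              ring
          _ ≤ 4 * sn * Lam ^ (p-1) * Lam / lam * (qn ^ (p-1) * D) :=
              mul_le_mul_of_nonneg_left h5 hcoef
      calc frobNorm (pLapAT p T₁ Q - pLapAT p T₂ Q)
          ≤ Lam ^ (p-1) * qn ^ (p-1) * D + X * (sn * Lam) := hLHS
        _ ≤ Lam ^ (p-1) * qn ^ (p-1) * D + 2 * (Lam ^ (p-1) * qn ^ (p-1)) * (sn * Lam) :=
            add_le_add_right (mul_le_mul_of_nonneg_right hXb hsnL) _
        _ ≤ Lam ^ (p-1) * qn ^ (p-1) * D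
            + 4 * sn * Lam ^ (p-1) * Lam / lam * (qn ^ (p-1) * D) :=
            add_le_add_right hfar _
        _ = (Lam ^ (p-1) + 4 * sn * Lam ^ (p-1) * Lam / lam) * qn ^ (p-1) * D := by ring
        _ ≤ c * qn ^ (p-1) * D := by
            apply mul_le_mul_of_nonneg_right _ hD0
            apply mul_le_mul_of_nonneg_right _ hqp.le
            rw [hc']; linarith
end

section
/- Let ω : (0,1] → (0,∞) be a non-decreasing function of class C¹ on (0,1] such that ∫_0^1 ω(r)/r dr = ∞, and suppose that the limit lim_{r→0⁺} r ω′(r)/ω(r) exists. Then there exists δ ∈ (0,1) such that the function r ↦ ω(r)/(r ω̄(r)) is non-increasing on (0, δ), where ω̄(r) = ∫_r^1 ω(ρ)/ρ dρ. -/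
open MeasureTheory Filter

theorem stmt8 (ω ω' : ℝ → ℝ)
    (hωpos : ∀ r ∈ Set.Ioc (0 : ℝ) 1, 0 < ω r)
    (hωmono : MonotoneOn ω (Set.Ioc 0 1))
    (hderiv : ∀ r ∈ Set.Ioc (0 : ℝ) 1, HasDerivWithinAt ω (ω' r) (Set.Ioc 0 1) r)
    (hω'cont : ContinuousOn ω' (Set.Ioc 0 1))
    (hdiv : Tendsto (fun a => ∫ r in a..1, ω r / r) (nhdsWithin 0 (Set.Ioi 0)) atTop)
    (hL : ∃ L : ℝ,
      Tendsto (fun r => r * ω' r / ω r) (nhdsWithin 0 (Set.Ioi 0)) (nhds L)) :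
    ∃ δ ∈ Set.Ioo (0 : ℝ) 1,
      AntitoneOn (fun r => ω r / (r * ∫ ρ in r..1, ω ρ / ρ)) (Set.Ioo 0 δ) := by
  obtain ⟨L, hLt⟩ := hL
  have ωcont : ContinuousOn ω (Set.Ioc 0 1) := fun r hr => (hderiv r hr).continuousWithinAt
  have hω1 : 0 < ω 1 := hωpos 1 ⟨one_pos, le_refl 1⟩
  have hderivAt : ∀ r ∈ Set.Ioo (0:ℝ) 1, HasDerivAt ω (ω' r) r := by
    intro r hr
    exact (hderiv r ⟨hr.1, hr.2.le⟩).hasDerivAt (Ioc_mem_nhds hr.1 hr.2)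
  set f : ℝ → ℝ := fun ρ => ω ρ / ρ with hf
  have fcont : ContinuousOn f (Set.Ioc 0 1) :=
    ωcont.div continuousOn_id fun x hx => ne_of_gt hx.1
  have fint : ∀ a b : ℝ, 0 < a → a ≤ b → b ≤ 1 → IntervalIntegrable f volume a b := by
    intro a b ha hab hb1
    apply (fcont.mono ?_).intervalIntegrable
    rw [Set.uIcc_of_le hab]
    exact fun x hx => ⟨lt_of_lt_of_le ha hx.1, le_trans hx.2 hb1⟩
  have hIoo : Set.Ioo (0:ℝ) 1 ∈ nhdsWithin (0:ℝ) (Set.Ioi 0) :=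
    Ioo_mem_nhdsGT_of_mem ⟨le_refl 0, one_pos⟩
  -- Key eventual bound: r * ω' r ≤ ω r / 2 near 0.
  have key : ∀ᶠ r in nhdsWithin (0:ℝ) (Set.Ioi 0), r * ω' r ≤ ω r / 2 := by
    rcases lt_or_ge L (1/2) with hL2 | hL2
    · filter_upwards [hLt.eventually_lt_const hL2, hIoo] with r h1 h2
      have hpos := hωpos r ⟨h2.1, h2.2.le⟩
      have := (div_lt_iff₀ hpos).mp h1
      linarith
    · exfalso
      have h1 := hLt.eventually_const_lt (show (1:ℝ)/4 < L by linarith)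
      obtain ⟨η, hηmem, hηsub⟩ := mem_nhdsGT_iff_exists_Ioo_subset.mp (h1.and hIoo)
      have hηpos : (0:ℝ) < η := hηmem
      set η0 : ℝ := min η 1 / 2 with hη0
      have hη0pos : 0 < η0 := by positivity
      have hη0ltη : η0 < η := by
        have h := min_le_left η 1
        have : (0:ℝ) < min η 1 := lt_min hηpos one_pos
        simp only [hη0]; linarith
      have hη0lt1 : η0 < 1 := by
        have h := min_le_right η 1
        have : (0:ℝ) < min η 1 := lt_min hηpos one_pos
        simp only [hη0]; linarith
      have hη0Ioc : η0 ∈ Set.Ioc (0:ℝ) 1 := ⟨hη0pos, hη0lt1.le⟩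
      have hωη0 : 0 < ω η0 := hωpos _ hη0Ioc
      set K : ℝ := ω η0 / η0 ^ ((1:ℝ)/4) with hK
      have hKpos : 0 < K := div_pos hωη0 (Real.rpow_pos_of_pos hη0pos _)
      -- ω a ≤ K * a^(1/4) on (0, η0]
      have claim : ∀ a ∈ Set.Ioc (0:ℝ) η0, ω a ≤ K * a ^ ((1:ℝ)/4) := by
        intro a ha
        set g : ℝ → ℝ := fun r => ω r * r ^ (-(1:ℝ)/4) with hg
        have hsub : Set.Icc a η0 ⊆ Set.Ioc (0:ℝ) 1 := fun x hx =>
          ⟨lt_of_lt_of_le ha.1 hx.1, le_trans hx.2 hη0lt1.le⟩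
        have hmono : MonotoneOn g (Set.Icc a η0) := by
          have hdg : ∀ x ∈ Set.Ioo a η0,
              HasDerivAt g (ω' x * x ^ (-(1:ℝ)/4) + ω x * (-(1:ℝ)/4 * x ^ (-(1:ℝ)/4 - 1))) x := by
            intro x hx
            have hx01 : x ∈ Set.Ioo (0:ℝ) 1 :=
              ⟨lt_trans ha.1 hx.1, lt_of_lt_of_le hx.2 hη0lt1.le⟩
            exact (hderivAt x hx01).mul
              (Real.hasDerivAt_rpow_const (Or.inl (ne_of_gt hx01.1)))
          apply monotoneOn_of_deriv_nonneg (convex_Icc a η0)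
          · apply ContinuousOn.mul (ωcont.mono hsub)
            intro x hx
            exact (Real.continuousAt_rpow_const x _
              (Or.inl (ne_of_gt (hsub hx).1))).continuousWithinAt
          · rw [interior_Icc]
            exact fun x hx => (hdg x hx).differentiableAt.differentiableWithinAt
          · rw [interior_Icc]
            intro x hx
            rw [(hdg x hx).deriv]
            have hx0 : (0:ℝ) < x := lt_trans ha.1 hx.1
            have hxη : x ∈ Set.Ioo (0:ℝ) η := ⟨hx0, lt_trans hx.2 hη0ltη⟩
            have hq := (hηsub hxη).1
            have hωx := hωpos x ⟨hx0, (lt_of_lt_of_le hx.2 hη0lt1.le).le⟩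
            have hgt : ω x / 4 < x * ω' x := by
              rw [lt_div_iff₀ hωx] at hq; linarith
            have hP : (0:ℝ) < x ^ (-(1:ℝ)/4 - 1) := Real.rpow_pos_of_pos hx0 _
            have hPx : x ^ (-(1:ℝ)/4) = x ^ (-(1:ℝ)/4 - 1) * x := by
              rw [← Real.rpow_add_one (ne_of_gt hx0)]
              ring_nf
            rw [hPx]
            nlinarith
        have hga : g a ≤ g η0 := hmono ⟨le_refl a, ha.2⟩ ⟨ha.2, le_refl η0⟩ ha.2
        have ha4 : (0:ℝ) < a ^ ((1:ℝ)/4) := Real.rpow_pos_of_pos ha.1 _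
        have haneg : a ^ (-(1:ℝ)/4) = (a ^ ((1:ℝ)/4))⁻¹ := by
          rw [show (-(1:ℝ)/4) = -((1:ℝ)/4) by ring, Real.rpow_neg ha.1.le]
        have hη0neg : η0 ^ (-(1:ℝ)/4) = (η0 ^ ((1:ℝ)/4))⁻¹ := by
          rw [show (-(1:ℝ)/4) = -((1:ℝ)/4) by ring, Real.rpow_neg hη0pos.le]
        have hη4 : (0:ℝ) < η0 ^ ((1:ℝ)/4) := Real.rpow_pos_of_pos hη0pos _
        simp only [hg, haneg, hη0neg] at hga
        have hmm := mul_le_mul_of_nonneg_right hga ha4.le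
        have hone : (a ^ ((1:ℝ)/4))⁻¹ * a ^ ((1:ℝ)/4) = 1 := inv_mul_cancel₀ (ne_of_gt ha4)
        have heq1 : ω a * (a ^ ((1:ℝ)/4))⁻¹ * a ^ ((1:ℝ)/4) = ω a := by
          rw [mul_assoc, hone, mul_one]
        have heq2 : ω η0 * (η0 ^ ((1:ℝ)/4))⁻¹ * a ^ ((1:ℝ)/4) = K * a ^ ((1:ℝ)/4) := by
          rw [hK]; ring
        rw [heq1, heq2] at hmm
        exact hmm
      -- bound the integral
      set C : ℝ := ∫ ρ in η0..1, f ρ with hC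
      set B : ℝ := 4 * K * η0 ^ ((1:ℝ)/4) + C with hB
      have hbound : ∀ a ∈ Set.Ioo (0:ℝ) η0, (∫ ρ in a..1, f ρ) ≤ B := by
        intro a ha
        have h1 : IntervalIntegrable f volume a η0 := fint a η0 ha.1 ha.2.le hη0lt1.le
        have h2 : IntervalIntegrable f volume η0 1 := fint η0 1 hη0pos hη0lt1.le le_rfl
        have hsplit : (∫ ρ in a..η0, f ρ) + (∫ ρ in η0..1, f ρ) = ∫ ρ in a..1, f ρ :=
          intervalIntegral.integral_add_adjacent_intervals h1 h2
        have hrint : IntervalIntegrable (fun r : ℝ => K * r ^ (-(3:ℝ)/4)) volume a η0 :=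
          (intervalIntegral.intervalIntegrable_rpow' (by norm_num)).const_mul K
        have hle : (∫ ρ in a..η0, f ρ) ≤ ∫ r in a..η0, K * r ^ (-(3:ℝ)/4) := by
          apply intervalIntegral.integral_mono_on ha.2.le h1 hrint
          intro x hx
          have hx0 : (0:ℝ) < x := lt_of_lt_of_le ha.1 hx.1
          have hcl := claim x ⟨hx0, hx.2⟩
          have hxr : x ^ (-(3:ℝ)/4) = x ^ ((1:ℝ)/4) / x := by
            rw [eq_div_iff (ne_of_gt hx0)]
            rw [← Real.rpow_add_one (ne_of_gt hx0)]
            norm_num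
          simp only [hf]
          rw [hxr, mul_div_assoc']
          exact div_le_div_of_nonneg_right hcl hx0.le
        have hcalc : (∫ r in a..η0, K * r ^ (-(3:ℝ)/4)) ≤ 4 * K * η0 ^ ((1:ℝ)/4) := by
          rw [intervalIntegral.integral_const_mul,
            integral_rpow (Or.inl (show (-1:ℝ) < -(3:ℝ)/4 by norm_num))]
          have he : (-(3:ℝ)/4) + 1 = (1:ℝ)/4 := by norm_num
          rw [he]
          have h4 : (0:ℝ) ≤ a ^ ((1:ℝ)/4) := (Real.rpow_pos_of_pos ha.1 _).le
          nlinarith [mul_nonneg hKpos.le h4]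
        rw [← hsplit, hB, hC]
        linarith
      -- contradiction with divergence
      have hev := (hdiv.eventually_ge_atTop (B + 1)).and
        ((Ioo_mem_nhdsGT_of_mem ⟨le_refl (0:ℝ), hη0pos⟩ :
          Set.Ioo (0:ℝ) η0 ∈ nhdsWithin (0:ℝ) (Set.Ioi 0)) :
          ∀ᶠ x in nhdsWithin (0:ℝ) (Set.Ioi 0), x ∈ Set.Ioo (0:ℝ) η0)
      obtain ⟨a, ha1, ha2⟩ := hev.exists
      have := hbound a ha2
      linarith
  -- ψ derivative
  have hψderiv : ∀ r ∈ Set.Ioo (0:ℝ) 1,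
      HasDerivAt (fun u => ∫ ρ in u..1, f ρ) (-f r) r := by
    intro r hr
    have h1 : IntervalIntegrable f volume 1 r := (fint r 1 hr.1 hr.2.le le_rfl).symm
    have hfIoo : ContinuousOn f (Set.Ioo (0:ℝ) 1) := fcont.mono Set.Ioo_subset_Ioc_self
    have hc : ContinuousAt f r := hfIoo.continuousAt (Ioo_mem_nhds hr.1 hr.2)
    have h2 : StronglyMeasurableAtFilter f (nhds r) volume :=
      hfIoo.stronglyMeasurableAtFilter isOpen_Ioo r hr
    have h3 := (intervalIntegral.integral_hasDerivAt_right h1 h2 hc).neg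
    have heq : (fun u => ∫ ρ in u..1, f ρ) = fun u => -∫ ρ in (1:ℝ)..u, f ρ := by
      funext u
      rw [intervalIntegral.integral_symm]
    rw [heq]
    exact h3
  -- choose δ
  have hψev : ∀ᶠ r in nhdsWithin (0:ℝ) (Set.Ioi 0), 2 * ω 1 ≤ ∫ ρ in r..1, f ρ :=
    hdiv.eventually_ge_atTop _
  obtain ⟨ε, hεmem, hεsub⟩ := mem_nhdsGT_iff_exists_Ioo_subset.mp
    ((key.and hψev).and hIoo)
  have hεpos : (0:ℝ) < ε := hεmem
  refine ⟨min ε 1 / 2, ⟨by positivity, ?_⟩, ?_⟩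
  · have := min_le_right ε 1; linarith [lt_min hεpos one_pos]
  set δ : ℝ := min ε 1 / 2 with hδ
  have hδε : δ < ε := by
    have := min_le_left ε 1; have := lt_min hεpos one_pos
    simp only [hδ]; linarith
  have hδ1 : δ < 1 := by
    have := min_le_right ε 1; have := lt_min hεpos one_pos
    simp only [hδ]; linarith
  have hprops : ∀ r ∈ Set.Ioo (0:ℝ) δ,
      (r * ω' r ≤ ω r / 2 ∧ 2 * ω 1 ≤ ∫ ρ in r..1, f ρ) ∧ r ∈ Set.Ioo (0:ℝ) 1 :=
    fun r hrδ => hεsub ⟨hrδ.1, lt_trans hrδ.2 hδε⟩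
  -- derivative of the quotient
  set ψ : ℝ → ℝ := fun u => ∫ ρ in u..1, f ρ with hψ
  have hFd : ∀ r ∈ Set.Ioo (0:ℝ) δ,
      HasDerivAt (fun u => ω u / (u * ψ u))
        ((ω' r * (r * ψ r) - ω r * (1 * ψ r + r * -f r)) / (r * ψ r) ^ 2) r := by
    intro r hrδ
    obtain ⟨⟨hr1, hr2⟩, hr01⟩ := hprops r hrδ
    have hψpos : 0 < ψ r := lt_of_lt_of_le (by linarith) hr2
    exact (hderivAt r hr01).div
      ((hasDerivAt_id r).mul (hψderiv r hr01)) (ne_of_gt (mul_pos hr01.1 hψpos))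
  have hF0 : ∀ r ∈ Set.Ioo (0:ℝ) δ,
      (ω' r * (r * ψ r) - ω r * (1 * ψ r + r * -f r)) / (r * ψ r) ^ 2 ≤ 0 := by
    intro r hrδ
    obtain ⟨⟨hr1, hr2⟩, hr01⟩ := hprops r hrδ
    have hψpos : 0 < ψ r := lt_of_lt_of_le (by linarith) hr2
    have hωr : 0 < ω r := hωpos r ⟨hr01.1, hr01.2.le⟩
    have hωr1 : ω r ≤ ω 1 := hωmono ⟨hr01.1, hr01.2.le⟩ ⟨one_pos, le_refl 1⟩ hr01.2.le
    have hr0 : r ≠ 0 := ne_of_gt hr01.1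
    have hrf : r * f r = ω r := by
      simp only [hf]
      rw [mul_comm]
      exact div_mul_cancel₀ _ hr0
    apply div_nonpos_of_nonpos_of_nonneg _ (sq_nonneg _)
    have : r * -f r = -(ω r) := by rw [← hrf]; ring
    rw [this]
    have h1 : ω' r * (r * ψ r) ≤ ω r / 2 * ψ r := by
      have := mul_le_mul_of_nonneg_right hr1 hψpos.le
      nlinarith
    nlinarith
  -- conclude antitone
  have hdiff : DifferentiableOn ℝ (fun u => ω u / (u * ψ u)) (Set.Ioo 0 δ) :=
    fun r hr => ((hFd r hr).differentiableAt).differentiableWithinAt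
  have := antitoneOn_of_deriv_nonpos (convex_Ioo (0:ℝ) δ) hdiff.continuousOn
    (by rw [interior_Ioo]; exact hdiff) ?_
  · exact this
  · rw [interior_Ioo]
    intro x hx
    rw [(hFd x hx).deriv]
    exact hF0 x hx
end

section
/- Let ω, η : (0,1] → (0,∞) be continuous non-decreasing functions with lim_{r→0⁺} ω(r) = 0 and lim_{r→0⁺} η(r) = 0, and define ω₁(r) = inf_{s ∈ [r,1]} ω(s)/η(s) for r ∈ (0,1]. Then lim_{r→0⁺} ω(r)/ω₁(r) = 0. -/
open Filter

theorem stmt15 (ω η : ℝ → ℝ)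
    (hωpos : ∀ r ∈ Set.Ioc (0 : ℝ) 1, 0 < ω r)
    (hηpos : ∀ r ∈ Set.Ioc (0 : ℝ) 1, 0 < η r)
    (hωmono : MonotoneOn ω (Set.Ioc 0 1))
    (hηmono : MonotoneOn η (Set.Ioc 0 1))
    (hωcont : ContinuousOn ω (Set.Ioc 0 1))
    (hηcont : ContinuousOn η (Set.Ioc 0 1))
    (hω0 : Tendsto ω (nhdsWithin 0 (Set.Ioi 0)) (nhds 0))
    (hη0 : Tendsto η (nhdsWithin 0 (Set.Ioi 0)) (nhds 0))
    (ω₁ : ℝ → ℝ)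
    (hω₁ : ∀ r ∈ Set.Ioc (0 : ℝ) 1,
      ω₁ r = sInf ((fun s => ω s / η s) '' Set.Icc r 1)) :
    Tendsto (fun r => ω r / ω₁ r) (nhdsWithin 0 (Set.Ioi 0)) (nhds 0) := by
  have hη1 : 0 < η 1 := hηpos 1 ⟨one_pos, le_refl 1⟩
  -- the infimum is attained
  have attain : ∀ r ∈ Set.Ioc (0 : ℝ) 1, ∃ s ∈ Set.Icc r 1,
      ω₁ r = ω s / η s ∧ ∀ t ∈ Set.Icc r 1, ω s / η s ≤ ω t / η t := by
    intro r hr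
    have hsub : Set.Icc r 1 ⊆ Set.Ioc (0 : ℝ) 1 := fun x hx => ⟨lt_of_lt_of_le hr.1 hx.1, hx.2⟩
    have hcont : ContinuousOn (fun s => ω s / η s) (Set.Icc r 1) :=
      (hωcont.mono hsub).div (hηcont.mono hsub) (fun x hx => (hηpos x (hsub hx)).ne')
    obtain ⟨s, hs, hmin⟩ := (isCompact_Icc).exists_isMinOn ⟨1, ⟨hr.2, le_refl 1⟩⟩ hcont
    refine ⟨s, hs, ?_, fun t ht => hmin ht⟩
    rw [hω₁ r hr]
    exact (IsLeast.csInf_eq ⟨⟨s, hs, rfl⟩, fun y ⟨t, ht, hty⟩ => hty ▸ hmin ht⟩)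
  rw [Metric.tendsto_nhdsWithin_nhds]
  intro ε hε
  rw [Metric.tendsto_nhdsWithin_nhds] at hω0 hη0
  obtain ⟨δ₁, hδ₁, hη⟩ := hη0 (ε/2) (by linarith)
  set d : ℝ := min δ₁ 1 / 2 with hd
  have hd0 : 0 < d := by positivity
  have hd1 : d ≤ 1 := by
    have : min δ₁ 1 ≤ 1 := min_le_right _ _
    simp only [hd]; linarith
  have hdIoc : d ∈ Set.Ioc (0:ℝ) 1 := ⟨hd0, hd1⟩
  have hωd : 0 < ω d := hωpos d hdIoc
  have hηd : η d < ε / 2 := by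
    have := hη (Set.mem_Ioi.mpr hd0) (by
      rw [Real.dist_eq, sub_zero, abs_of_pos hd0]
      calc d < min δ₁ 1 := by simpa [hd] using half_lt_self (by positivity : (0:ℝ) < min δ₁ 1)
        _ ≤ δ₁ := min_le_left _ _)
    rw [Real.dist_eq, sub_zero] at this
    exact lt_of_le_of_lt (le_abs_self _) this
  obtain ⟨δ₂, hδ₂, hω⟩ := hω0 (ε/2 * (ω d / η 1)) (by positivity)
  refine ⟨min δ₂ d, lt_min hδ₂ hd0, ?_⟩
  intro r hr hrd
  rw [Real.dist_eq, sub_zero, abs_of_pos (Set.mem_Ioi.mp hr)] at hrd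
  have hrδ₂ : r < δ₂ := lt_of_lt_of_le hrd (min_le_left _ _)
  have hrd' : r < d := lt_of_lt_of_le hrd (min_le_right _ _)
  have hrIoc : r ∈ Set.Ioc (0:ℝ) 1 := ⟨hr, le_trans hrd'.le hd1⟩
  obtain ⟨s, hs, hval, hmin⟩ := attain r hrIoc
  have hsIoc : s ∈ Set.Ioc (0:ℝ) 1 := ⟨lt_of_lt_of_le hrIoc.1 hs.1, hs.2⟩
  have hωs : 0 < ω s := hωpos s hsIoc
  have hηs : 0 < η s := hηpos s hsIoc
  have hω₁pos : 0 < ω₁ r := hval ▸ div_pos hωs hηs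
  have hωr : 0 < ω r := hωpos r hrIoc
  have key : ω r / ω₁ r = ω r * η s / ω s := by
    rw [hval]; field_simp
  rw [Real.dist_eq, sub_zero, abs_of_pos (div_pos hωr hω₁pos), key]
  rcases le_or_gt s d with hsd | hsd
  · have h1 : ω r ≤ ω s := hωmono hrIoc hsIoc hs.1
    have h2 : η s ≤ η d := hηmono hsIoc hdIoc hsd
    have step1 : ω r * η s / ω s ≤ η s := by
      rw [div_le_iff₀ hωs]
      nlinarith [mul_le_mul_of_nonneg_right h1 hηs.le]
    linarith
  · have h1 : ω d ≤ ω s := hωmono hdIoc hsIoc hsd.le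
    have h2 : η s ≤ η 1 := hηmono hsIoc ⟨one_pos, le_refl 1⟩ hsIoc.2
    have hωrb : ω r < ε/2 * (ω d / η 1) := by
      have := hω (Set.mem_Ioi.mpr hr) (by rw [Real.dist_eq, sub_zero, abs_of_pos hr]; exact hrδ₂)
      rw [Real.dist_eq, sub_zero] at this
      exact lt_of_le_of_lt (le_abs_self _) this
    have step1 : ω r * η s / ω s ≤ ω r * η 1 / ω d :=
      div_le_div₀ (by positivity) (mul_le_mul_of_nonneg_left h2 hωr.le) hωd h1
    have heq : ε/2 * (ω d / η 1) * η 1 = ε/2 * ω d := by rw [mul_assoc, div_mul_cancel₀ _ hη1.ne']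
    have step2 : ω r * η 1 / ω d < ε/2 := by
      rw [div_lt_iff₀ hωd]
      nlinarith [mul_lt_mul_of_pos_right hωrb hη1]
    linarith
end

section
/- Let β ≥ 0, c_ω ≥ 1, and let ω : (0,1] → (0,∞) be a continuous non-decreasing function satisfying ω(r) ≤ c_ω θ^{−β} ω(θr) for all θ ∈ (0,1) and r ∈ (0,1], and the Dini condition ∫_0^1 ω(r)/r dr < ∞. Then there exist a continuous non-decreasing function ω₁ : (0,1] → (0,∞) and a constant c > 0 such that: (i) c ω(r) ≤ ω₁(r) for all r ∈ (0,1]; (ii) ω₁(r) ≤ c_ω θ^{−β} ω₁(θr) for all θ ∈ (0,1) and r ∈ (0,1]; (iii) ∫_0^1 ω₁(r)/r dr < ∞; (iv) lim_{r→0⁺} (ω(r)/ω₁(r)) ∫_r^1 ω₁(s)/s ds = 0. -/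
open MeasureTheory Filter Set

/-- The min of a continuous function on `Icc a b` is attained. -/
lemma stmt16_min_attained {f : ℝ → ℝ} {a b : ℝ} (hab : a ≤ b)
    (hf : ContinuousOn f (Icc a b)) :
    ∃ s₀ ∈ Icc a b, sInf (f '' Icc a b) = f s₀ ∧ ∀ s ∈ Icc a b, f s₀ ≤ f s := by
  obtain ⟨s₀, hs₀, hmin⟩ := isCompact_Icc.exists_isMinOn (Set.nonempty_Icc.2 hab) hf
  refine ⟨s₀, hs₀, ?_, fun s hs => hmin hs⟩
  apply le_antisymm
  · exact csInf_le ⟨f s₀, fun y ⟨s, hs, hy⟩ => hy ▸ hmin hs⟩ ⟨s₀, hs₀, rfl⟩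
  · exact le_csInf ⟨f s₀, s₀, hs₀, rfl⟩ (fun y ⟨s, hs, hy⟩ => hy ▸ hmin hs)

/-- The running infimum `r ↦ inf_{[r,b]} f` of a continuous function is continuous. -/
lemma stmt16_runningInf_cont {f : ℝ → ℝ} {a b : ℝ} (hab : a ≤ b)
    (hf : ContinuousOn f (Icc a b)) :
    ContinuousOn (fun r => sInf (f '' Icc r b)) (Icc a b) := by
  set F : ℝ → ℝ := fun r => sInf (f '' Icc r b) with hF
  have hmono : ∀ x ∈ Icc a b, ∀ y ∈ Icc a b, x ≤ y → F x ≤ F y := by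
    intro x hx y hy hxy
    obtain ⟨s₀, hs₀, hFx, hminx⟩ := stmt16_min_attained hx.2 (hf.mono (Icc_subset_Icc hx.1 le_rfl))
    apply csInf_le_csInf ⟨f s₀, ?_⟩ ((nonempty_Icc.2 hy.2).image f)
      (Set.image_mono (f := f) (Icc_subset_Icc hxy le_rfl))
    rintro y ⟨s, hs, rfl⟩
    exact hminx s hs
  -- uniform continuity
  have huc := isCompact_Icc.uniformContinuousOn_of_continuous (s := Icc a b) hf
  rw [Metric.uniformContinuousOn_iff] at huc
  intro r hr
  rw [Metric.continuousWithinAt_iff]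
  intro ε hε
  obtain ⟨δ, hδ, hδε⟩ := huc (ε / 2) (by linarith)
  -- key: for x ≤ y close, F y ≤ F x + ε/2
  have key : ∀ x ∈ Icc a b, ∀ y ∈ Icc a b, x ≤ y → dist x y < δ → F y - F x ≤ ε / 2 := by
    intro x hx y hy hxy hd
    obtain ⟨s₀, hs₀, hFx, hminx⟩ := stmt16_min_attained hx.2 (hf.mono (Icc_subset_Icc hx.1 le_rfl))
    have hs₀ab : s₀ ∈ Icc a b := ⟨le_trans hx.1 hs₀.1, hs₀.2⟩
    have hFx' : F x = f s₀ := hFx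
    have hbdd : BddBelow (f '' Icc y b) := ⟨f s₀, by
      rintro z ⟨s, hs, rfl⟩
      exact hminx s ⟨le_trans hxy hs.1, hs.2⟩⟩
    by_cases hc : y ≤ s₀
    · have h3 : F y ≤ f s₀ := csInf_le hbdd ⟨s₀, ⟨hc, hs₀.2⟩, rfl⟩
      rw [hFx']; linarith
    · push_neg at hc
      have hdist : dist s₀ y < δ := by
        rw [Real.dist_eq, abs_lt]; rw [Real.dist_eq, abs_lt] at hd
        constructor
        · linarith [hs₀.1]
        · linarith
      have hfy : f y < f s₀ + ε / 2 := by
        have h4 := hδε s₀ hs₀ab y hy hdist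
        rw [Real.dist_eq] at h4
        rcases abs_lt.1 h4 with ⟨h1, h2⟩
        linarith
      have h5 : F y ≤ f y := csInf_le hbdd ⟨y, ⟨le_rfl, hy.2⟩, rfl⟩
      rw [hFx']
      linarith
  refine ⟨δ, hδ, fun x hx hd => ?_⟩
  have h2 : dist (F x) (F r) ≤ ε / 2 := by
    rw [Real.dist_eq, abs_le]
    rcases le_total x r with h | h
    · have h1 := key x hx r hr h (by rwa [dist_comm] at hd ⊢)
      have h0 := hmono x hx r hr h
      constructor <;> linarith
    · have h1 := key r hr x hx h (by rwa [dist_comm] at hd)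
      have h0 := hmono r hr x hx h
      constructor <;> linarith
  linarith

theorem stmt16 (β c_ω : ℝ) (hβ : 0 ≤ β) (hc : 1 ≤ c_ω) (ω : ℝ → ℝ)
    (hωpos : ∀ r ∈ Set.Ioc (0 : ℝ) 1, 0 < ω r)
    (hωmono : MonotoneOn ω (Set.Ioc 0 1))
    (hωcont : ContinuousOn ω (Set.Ioc 0 1))
    (hωdec : ∀ θ ∈ Set.Ioo (0 : ℝ) 1, ∀ r ∈ Set.Ioc (0 : ℝ) 1,
      ω r ≤ c_ω * θ ^ (-β) * ω (θ * r))
    (hdini : IntegrableOn (fun r => ω r / r) (Set.Ioc 0 1)) :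
    ∃ ω₁ : ℝ → ℝ, ∃ c : ℝ, 0 < c
      ∧ (∀ r ∈ Set.Ioc (0 : ℝ) 1, 0 < ω₁ r)
      ∧ MonotoneOn ω₁ (Set.Ioc 0 1)
      ∧ ContinuousOn ω₁ (Set.Ioc 0 1)
      ∧ (∀ r ∈ Set.Ioc (0 : ℝ) 1, c * ω r ≤ ω₁ r)
      ∧ (∀ θ ∈ Set.Ioo (0 : ℝ) 1, ∀ r ∈ Set.Ioc (0 : ℝ) 1,
          ω₁ r ≤ c_ω * θ ^ (-β) * ω₁ (θ * r))
      ∧ IntegrableOn (fun r => ω₁ r / r) (Set.Ioc 0 1)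
      ∧ Tendsto (fun r => (ω r / ω₁ r) * ∫ s in r..1, ω₁ s / s)
          (nhdsWithin 0 (Set.Ioi 0)) (nhds 0) := by
  classical
  have hq_int : IntegrableOn (fun r => ω r / r) (Set.Icc 0 1) :=
    (integrableOn_Icc_iff_integrableOn_Ioc enorm_ne_top).2 hdini
  set W : ℝ → ℝ := fun x => ∫ t in Set.Ioc 0 x, ω t / t with hWdef
  have hq_nonneg : ∀ t ∈ Set.Ioc (0:ℝ) 1, 0 ≤ ω t / t :=
    fun t ht => div_nonneg (hωpos t ht).le ht.1.le
  have hq_nonneg_ae : ∀ {s : Set ℝ}, MeasurableSet s → s ⊆ Set.Ioc 0 1 →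
      0 ≤ᵐ[volume.restrict s] (fun t => ω t / t) := by
    intro s hs hsub
    exact (ae_restrict_iff' hs).2
      (Filter.Eventually.of_forall (fun t ht => hq_nonneg t (hsub ht)))
  have hWcont : ContinuousOn W (Set.Icc 0 1) := intervalIntegral.continuousOn_primitive hq_int
  have hWmono : MonotoneOn W (Set.Icc 0 1) := by
    intro x hx y hy hxy
    exact setIntegral_mono_set (hdini.mono_set (Set.Ioc_subset_Ioc le_rfl hy.2))
      (hq_nonneg_ae measurableSet_Ioc (Set.Ioc_subset_Ioc le_rfl hy.2))
      (HasSubset.Subset.eventuallyLE (Set.Ioc_subset_Ioc le_rfl hxy))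
  have hW0 : W 0 = 0 := by simp [hWdef]
  have hWnonneg : ∀ x ∈ Set.Icc (0:ℝ) 1, 0 ≤ W x := by
    intro x hx
    rw [← hW0]
    exact hWmono (Set.left_mem_Icc.2 zero_le_one) hx hx.1
  have hWpos : ∀ r ∈ Set.Ioc (0:ℝ) 1, 0 < W r := by
    intro r hr
    have hsub : Set.Ioc (r/2) r ⊆ Set.Ioc 0 1 := Set.Ioc_subset_Ioc (by linarith [hr.1]) hr.2
    have h1 : ∫ t in Set.Ioc (r/2) r, ω t / t ≤ W r :=
      setIntegral_mono_set (hdini.mono_set (Set.Ioc_subset_Ioc le_rfl hr.2))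
        (hq_nonneg_ae measurableSet_Ioc (Set.Ioc_subset_Ioc le_rfl hr.2))
        (HasSubset.Subset.eventuallyLE (Set.Ioc_subset_Ioc (by linarith [hr.1]) le_rfl))
    have h2 : (ω (r/2) / r) * (volume (Set.Ioc (r/2) r)).toReal
        ≤ ∫ t in Set.Ioc (r/2) r, ω t / t := by
      apply setIntegral_ge_of_const_le_real measurableSet_Ioc (by simp)
      · intro t ht
        have ht' : t ∈ Set.Ioc (0:ℝ) 1 := hsub ht
        have h3 : ω (r/2) ≤ ω t := hωmono ⟨by linarith [hr.1], by linarith [hr.2]⟩ ht' ht.1.le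
        have h4 : ω (r/2) / r ≤ ω (r/2) / t :=
          div_le_div_of_nonneg_left (hωpos _ ⟨by linarith [hr.1], by linarith [hr.2]⟩).le
            ht'.1 ht.2
        calc ω (r/2) / r ≤ ω (r/2) / t := h4
          _ ≤ ω t / t := (div_le_div_iff_of_pos_right ht'.1).2 h3
      · exact hdini.mono_set hsub
    have h5 : (volume (Set.Ioc (r/2) r)).toReal = r/2 := by
      rw [Real.volume_Ioc, ENNReal.toReal_ofReal (by linarith [hr.1])]
      ring
    have h6 : 0 < ω (r/2) / r * (r/2) := by
      apply mul_pos (div_pos (hωpos _ ⟨by linarith [hr.1], by linarith [hr.2]⟩) hr.1)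
      linarith [hr.1]
    rw [h5] at h2
    linarith
  have hW1pos : 0 < W 1 := hWpos 1 ⟨one_pos, le_rfl⟩
  have hWtendsto : Tendsto W (nhdsWithin 0 (Set.Ioi 0)) (nhds 0) := by
    have h := hWcont 0 (Set.left_mem_Icc.2 zero_le_one)
    rw [ContinuousWithinAt, hW0] at h
    rw [← nhdsWithin_Ioc_eq_nhdsGT (one_pos : (0:ℝ) < 1)]
    exact h.mono_left (nhdsWithin_mono 0 Set.Ioc_subset_Icc_self)
  have hωbound : ∀ r ∈ Set.Ioc (0:ℝ) (1/2), ω r * Real.log 2 ≤ W (2*r) := by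
    intro r hr
    have hr0 : 0 < r := hr.1
    have h2r : 2*r ≤ 1 := by linarith [hr.2]
    have hsub2 : Set.Ioc r (2*r) ⊆ Set.Ioc 0 1 := Set.Ioc_subset_Ioc hr0.le h2r
    have hint2 : IntegrableOn (fun t => ω r * t⁻¹) (Set.Ioc r (2*r)) := by
      have hcts : ContinuousOn (fun t : ℝ => ω r * t⁻¹) (Set.Icc r (2*r)) :=
        continuousOn_const.mul (continuousOn_inv₀.mono
          (fun t ht => ne_of_gt (lt_of_lt_of_le hr0 ht.1)))
      exact (hcts.integrableOn_compact isCompact_Icc).mono_set Set.Ioc_subset_Icc_self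
    have h1 : ∫ t in Set.Ioc r (2*r), ω r * t⁻¹ ≤ ∫ t in Set.Ioc r (2*r), ω t / t := by
      apply setIntegral_mono_on hint2 (hdini.mono_set hsub2) measurableSet_Ioc
      intro t ht
      have ht' : t ∈ Set.Ioc (0:ℝ) 1 := hsub2 ht
      have h3 : ω r ≤ ω t := hωmono ⟨hr0, by linarith [hr.2]⟩ ht' ht.1.le
      rw [(by ring : ω r * t⁻¹ = ω r / t)]
      exact (div_le_div_iff_of_pos_right ht'.1).2 h3
    have h2 : ∫ t in Set.Ioc r (2*r), ω r * t⁻¹ = ω r * Real.log 2 := by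
      rw [MeasureTheory.integral_const_mul]
      congr 1
      rw [← intervalIntegral.integral_of_le (by linarith : r ≤ 2*r),
        integral_inv_of_pos hr0 (by linarith)]
      congr 1
      field_simp
    have h3 : ∫ t in Set.Ioc r (2*r), ω t / t ≤ W (2*r) :=
      setIntegral_mono_set (hdini.mono_set (Set.Ioc_subset_Ioc le_rfl h2r))
        (hq_nonneg_ae measurableSet_Ioc (Set.Ioc_subset_Ioc le_rfl h2r))
        (HasSubset.Subset.eventuallyLE (Set.Ioc_subset_Ioc hr0.le le_rfl))
    linarith
  have hωtendsto : Tendsto ω (nhdsWithin 0 (Set.Ioi 0)) (nhds 0) := by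
    have hdouble : Tendsto (fun r : ℝ => 2*r) (nhdsWithin 0 (Set.Ioi 0))
        (nhdsWithin 0 (Set.Ioi 0)) := by
      apply tendsto_nhdsWithin_of_tendsto_nhds_of_eventually_within
      · have : Tendsto (fun r : ℝ => 2*r) (nhds 0) (nhds 0) := by
          have hcm : Continuous (fun r : ℝ => 2*r) := continuous_const.mul continuous_id
          simpa using hcm.tendsto 0
        exact this.mono_left nhdsWithin_le_nhds
      · filter_upwards [self_mem_nhdsWithin] with r hr
        exact Set.mem_Ioi.2 (by linarith [Set.mem_Ioi.1 hr])
    apply squeeze_zero'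
    · filter_upwards [self_mem_nhdsWithin,
        Icc_mem_nhdsGT_of_mem (Set.mem_Ico.2 ⟨le_rfl, one_half_pos⟩)] with r hr hr2
      exact (hωpos r ⟨hr, le_trans hr2.2 (by norm_num)⟩).le
    · filter_upwards [self_mem_nhdsWithin,
        Icc_mem_nhdsGT_of_mem (Set.mem_Ico.2 ⟨le_rfl, one_half_pos⟩)] with r hr hr2
      have := hωbound r ⟨hr, hr2.2⟩
      have hlog : 0 < Real.log 2 := Real.log_pos (by norm_num)
      calc ω r = ω r * Real.log 2 / Real.log 2 := by field_simp
        _ ≤ W (2*r) / Real.log 2 := (div_le_div_iff_of_pos_right hlog).2 this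
    · have : Tendsto (fun r : ℝ => W (2*r) / Real.log 2) (nhdsWithin 0 (Set.Ioi 0))
          (nhds (0 / Real.log 2)) := (hWtendsto.comp hdouble).div_const _
      simpa using this
  set f : ℝ → ℝ := fun s => ω s / Real.sqrt (W s) with hfdef
  have hsqrtpos : ∀ s ∈ Set.Ioc (0:ℝ) 1, 0 < Real.sqrt (W s) :=
    fun s hs => Real.sqrt_pos.2 (hWpos s hs)
  have hfpos : ∀ s ∈ Set.Ioc (0:ℝ) 1, 0 < f s :=
    fun s hs => div_pos (hωpos s hs) (hsqrtpos s hs)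
  have hfcont : ContinuousOn f (Set.Ioc 0 1) :=
    hωcont.div ((hWcont.mono Set.Ioc_subset_Icc_self).sqrt)
      (fun s hs => ne_of_gt (hsqrtpos s hs))
  set ω₁ : ℝ → ℝ := fun r => sInf (f '' Set.Icc r 1) with hw1def
  have hIccsub : ∀ r ∈ Set.Ioc (0:ℝ) 1, Set.Icc r 1 ⊆ Set.Ioc 0 1 :=
    fun r hr s hs => ⟨lt_of_lt_of_le hr.1 hs.1, hs.2⟩
  have hmin : ∀ r ∈ Set.Ioc (0:ℝ) 1, ∃ s₀ ∈ Set.Icc r 1,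
      ω₁ r = f s₀ ∧ ∀ s ∈ Set.Icc r 1, f s₀ ≤ f s := by
    intro r hr
    exact stmt16_min_attained hr.2 (hfcont.mono (hIccsub r hr))
  have hω₁pos : ∀ r ∈ Set.Ioc (0:ℝ) 1, 0 < ω₁ r := by
    intro r hr
    obtain ⟨s₀, hs₀, heq, -⟩ := hmin r hr
    rw [heq]
    exact hfpos s₀ (hIccsub r hr hs₀)
  have hω₁le : ∀ r ∈ Set.Ioc (0:ℝ) 1, ω₁ r ≤ f r := by
    intro r hr
    obtain ⟨s₀, hs₀, heq, hminf⟩ := hmin r hr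
    rw [heq]
    exact hminf r ⟨le_rfl, hr.2⟩
  have hω₁mono : MonotoneOn ω₁ (Set.Ioc 0 1) := by
    intro x hx y hy hxy
    obtain ⟨s₀, hs₀, heq, hminf⟩ := hmin x hx
    apply csInf_le_csInf ⟨f s₀, ?_⟩ ((Set.nonempty_Icc.2 hy.2).image f)
      (Set.image_mono (f := f) (Set.Icc_subset_Icc hxy le_rfl))
    rintro z ⟨s, hs, rfl⟩
    exact hminf s hs
  have hω₁cont : ContinuousOn ω₁ (Set.Ioc 0 1) := by
    intro r hr
    have hsub : Set.Icc (r/2) 1 ⊆ Set.Ioc 0 1 :=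
      fun s hs => ⟨lt_of_lt_of_le (by linarith [hr.1]) hs.1, hs.2⟩
    have h := stmt16_runningInf_cont (by linarith [hr.1, hr.2] : r/2 ≤ 1)
      (hfcont.mono hsub)
    have h2 : ContinuousWithinAt ω₁ (Set.Icc (r/2) 1) r :=
      h r ⟨by linarith [hr.1], hr.2⟩
    apply h2.mono_of_mem_nhdsWithin
    apply mem_nhdsWithin.2 ⟨Set.Ioi (r/2), isOpen_Ioi, by simpa using half_lt_self hr.1, ?_⟩
    rintro s ⟨hs1, hs2⟩
    exact ⟨(Set.mem_Ioi.1 hs1).le, hs2.2⟩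
  have hcbound : ∀ r ∈ Set.Ioc (0:ℝ) 1, ω r / Real.sqrt (W 1) ≤ ω₁ r := by
    intro r hr
    apply le_csInf ((Set.nonempty_Icc.2 hr.2).image f)
    rintro z ⟨s, hs, rfl⟩
    have hs' : s ∈ Set.Ioc (0:ℝ) 1 := hIccsub r hr hs
    exact div_le_div₀ (hωpos s hs').le (hωmono hr hs' hs.1) (hsqrtpos s hs')
      (Real.sqrt_le_sqrt (hWmono (Set.Ioc_subset_Icc_self hs')
        (Set.right_mem_Icc.2 zero_le_one) hs'.2))
  have hcω0 : (0:ℝ) < c_ω := by linarith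
  have hω₁dec : ∀ θ ∈ Set.Ioo (0:ℝ) 1, ∀ r ∈ Set.Ioc (0:ℝ) 1,
      ω₁ r ≤ c_ω * θ ^ (-β) * ω₁ (θ * r) := by
    intro θ hθ r hr
    have hθr : θ * r ∈ Set.Ioc (0:ℝ) 1 :=
      ⟨mul_pos hθ.1 hr.1, le_trans (mul_le_of_le_one_left hr.1.le hθ.2.le) hr.2⟩
    have hθβ0 : (0:ℝ) < θ ^ β := Real.rpow_pos_of_pos hθ.1 β
    have hθβ1 : θ ^ β ≤ 1 := Real.rpow_le_one hθ.1.le hθ.2.le hβ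
    obtain ⟨s₀r, hs₀r, heqr, hminr⟩ := hmin r hr
    have hkey : θ ^ β / c_ω * ω₁ r ≤ ω₁ (θ * r) := by
      apply le_csInf ((Set.nonempty_Icc.2 hθr.2).image f)
      rintro z ⟨s, hs, rfl⟩
      have hs' : s ∈ Set.Ioc (0:ℝ) 1 := hIccsub (θ*r) hθr hs
      rcases le_or_gt r s with hrs | hsr
      · have h1 : ω₁ r ≤ f s := heqr ▸ hminr s ⟨hrs, hs.2⟩
        calc θ ^ β / c_ω * ω₁ r ≤ 1 * ω₁ r := by
              apply mul_le_mul_of_nonneg_right _ (hω₁pos r hr).le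
              rw [div_le_one hcω0]
              exact le_trans hθβ1 hc
          _ = ω₁ r := one_mul _
          _ ≤ f s := h1
      · have hsr1 : s / r ∈ Set.Ioo (0:ℝ) 1 := ⟨div_pos hs'.1 hr.1, (div_lt_one hr.1).2 hsr⟩
        have h2 := hωdec (s/r) hsr1 r hr
        rw [div_mul_cancel₀ _ (ne_of_gt hr.1)] at h2
        have hsrβ0 : (0:ℝ) < (s/r) ^ β := Real.rpow_pos_of_pos hsr1.1 β
        have hd : (s/r) ^ β / c_ω * ω r ≤ ω s := by
          rw [Real.rpow_neg (div_pos hs'.1 hr.1).le] at h2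
          rw [div_mul_eq_mul_div, div_le_iff₀ hcω0]
          calc (s/r) ^ β * ω r ≤ (s/r) ^ β * (c_ω * ((s/r) ^ β)⁻¹ * ω s) :=
                mul_le_mul_of_nonneg_left h2 hsrβ0.le
            _ = ω s * c_ω := by
                field_simp
        have hθsr : θ ^ β ≤ (s/r) ^ β := by
          apply Real.rpow_le_rpow hθ.1.le _ hβ
          rw [le_div_iff₀ hr.1]
          exact hs.1
        have hWsr : Real.sqrt (W s) ≤ Real.sqrt (W r) :=
          Real.sqrt_le_sqrt (hWmono (Set.Ioc_subset_Icc_self hs')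
            (Set.Ioc_subset_Icc_self hr) hsr.le)
        calc θ ^ β / c_ω * ω₁ r ≤ θ ^ β / c_ω * (ω r / Real.sqrt (W r)) :=
              mul_le_mul_of_nonneg_left (hω₁le r hr) (by positivity)
          _ ≤ (s/r) ^ β / c_ω * (ω r / Real.sqrt (W r)) := by
              apply mul_le_mul_of_nonneg_right _
                (div_nonneg (hωpos r hr).le (hsqrtpos r hr).le)
              exact (div_le_div_iff_of_pos_right hcω0).2 hθsr
          _ = ((s/r) ^ β / c_ω * ω r) / Real.sqrt (W r) := by ring
          _ ≤ ((s/r) ^ β / c_ω * ω r) / Real.sqrt (W s) := by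
              apply div_le_div_of_nonneg_left _ (hsqrtpos s hs') hWsr
              have h9 := (hωpos r hr).le
              positivity
          _ ≤ ω s / Real.sqrt (W s) := (div_le_div_iff_of_pos_right (hsqrtpos s hs')).2 hd
    calc ω₁ r = c_ω * θ ^ (-β) * (θ ^ β / c_ω * ω₁ r) := by
          rw [Real.rpow_neg hθ.1.le]
          field_simp
      _ ≤ c_ω * θ ^ (-β) * ω₁ (θ * r) := by
          apply mul_le_mul_of_nonneg_left hkey
          have : (0:ℝ) < θ ^ (-β) := Real.rpow_pos_of_pos hθ.1 _
          positivity
  have hWderiv : ∀ x ∈ Set.Ioo (0:ℝ) 1, HasDerivAt W (ω x / x) x := by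
    intro x hx
    have ha0 : (0:ℝ) < x/2 := by linarith [hx.1]
    have hax : x/2 < x := half_lt_self hx.1
    have hii : IntervalIntegrable (fun t => ω t / t) volume (x/2) x := by
      rw [intervalIntegrable_iff_integrableOn_Ioc_of_le hax.le]
      exact hdini.mono_set (Set.Ioc_subset_Ioc ha0.le hx.2.le)
    have hqcont : ContinuousOn (fun t => ω t / t) (Set.Ioo 0 1) :=
      (hωcont.mono Set.Ioo_subset_Ioc_self).div continuousOn_id
        (fun t ht => ne_of_gt ht.1)
    have hcontx : ContinuousAt (fun t => ω t / t) x :=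
      hqcont.continuousAt (Ioo_mem_nhds hx.1 hx.2)
    have hmeas : StronglyMeasurableAtFilter (fun t => ω t / t) (nhds x) :=
      ⟨Set.Ioo 0 1, Ioo_mem_nhds hx.1 hx.2,
        hqcont.aestronglyMeasurable measurableSet_Ioo⟩
    have h1 : HasDerivAt (fun u => ∫ t in (x/2)..u, ω t / t) (ω x / x) x :=
      intervalIntegral.integral_hasDerivAt_right hii hmeas hcontx
    have h2 : HasDerivAt (fun u => W (x/2) + ∫ t in (x/2)..u, ω t / t) (ω x / x) x :=
      h1.const_add (W (x/2))
    apply h2.congr_of_eventuallyEq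
    filter_upwards [Ioo_mem_nhds hax hx.2] with u hu
    rw [intervalIntegral.integral_of_le hu.1.le]
    show (∫ t in Set.Ioc 0 u, ω t / t) = (∫ t in Set.Ioc 0 (x/2), ω t / t)
      + ∫ t in Set.Ioc (x/2) u, ω t / t
    rw [← MeasureTheory.setIntegral_union (Set.Ioc_disjoint_Ioc_of_le le_rfl) measurableSet_Ioc
      (hdini.mono_set (Set.Ioc_subset_Ioc le_rfl (by linarith [hx.2] : x/2 ≤ 1)))
      (hdini.mono_set (Set.Ioc_subset_Ioc ha0.le hu.2.le)),
      Set.Ioc_union_Ioc_eq_Ioc ha0.le hu.1.le]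
  have hgderiv : ∀ x ∈ Set.Ioo (0:ℝ) 1, HasDerivAt (fun y => 2 * Real.sqrt (W y))
      (f x / x) x := by
    intro x hx
    have hx' : x ∈ Set.Ioc (0:ℝ) 1 := ⟨hx.1, hx.2.le⟩
    have h1 := ((hWderiv x hx).sqrt (ne_of_gt (hWpos x hx'))).const_mul 2
    refine h1.congr_deriv ?_
    rw [hfdef]
    have h3 := ne_of_gt (hsqrtpos x hx')
    field_simp
  have hfx_int : IntegrableOn (fun x => f x / x) (Set.Ioc 0 1) := by
    apply intervalIntegral.integrableOn_deriv_of_nonneg _ hgderiv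
    · intro x hx
      exact div_nonneg (hfpos x ⟨hx.1, hx.2.le⟩).le hx.1.le
    · exact continuousOn_const.mul hWcont.sqrt
  have hω₁int : IntegrableOn (fun r => ω₁ r / r) (Set.Ioc 0 1) := by
    apply Integrable.mono' hfx_int
      ((hω₁cont.div continuousOn_id
        (fun t ht => ne_of_gt ht.1)).aestronglyMeasurable measurableSet_Ioc)
    rw [ae_restrict_iff' measurableSet_Ioc]
    apply Filter.Eventually.of_forall
    intro x hx
    show ‖ω₁ x / x‖ ≤ f x / x
    rw [Real.norm_eq_abs, abs_of_nonneg (div_nonneg (hω₁pos x hx).le hx.1.le)]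
    exact (div_le_div_iff_of_pos_right hx.1).2 (hω₁le x hx)
  have hW1sq : 0 < Real.sqrt (W 1) := Real.sqrt_pos.2 hW1pos
  have hmemIoc : ∀ᶠ r in nhdsWithin (0:ℝ) (Set.Ioi 0), r ∈ Set.Ioc (0:ℝ) 1 := by
    filter_upwards [self_mem_nhdsWithin,
      Icc_mem_nhdsGT_of_mem (Set.mem_Ico.2 ⟨le_rfl, one_pos⟩)] with r h h'
    exact ⟨h, h'.2⟩
  have hratio : Tendsto (fun r => ω r / ω₁ r) (nhdsWithin 0 (Set.Ioi 0)) (nhds 0) := by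
    rw [Metric.tendsto_nhds]
    intro ε hε
    have hsqrtW : Tendsto (fun r => Real.sqrt (W r)) (nhdsWithin 0 (Set.Ioi 0))
        (nhds 0) := by
      have h := (Real.continuous_sqrt.tendsto 0).comp hWtendsto
      simpa [Function.comp_def] using h
    obtain ⟨δ₁, hδ₁mem, hδ₁ε⟩ :
        ∃ δ₁, δ₁ ∈ Set.Ioc (0:ℝ) 1 ∧ Real.sqrt (W δ₁) < ε :=
      (hmemIoc.and (hsqrtW.eventually (gt_mem_nhds hε))).exists
    have hωδ₁ : 0 < ω δ₁ := hωpos δ₁ hδ₁mem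
    have hK : 0 < ε * ω δ₁ / Real.sqrt (W 1) := by positivity
    filter_upwards [hmemIoc, hωtendsto.eventually (gt_mem_nhds hK)] with r hr' hrK
    obtain ⟨s₀, hs₀, heq, hminf⟩ := hmin r hr'
    have hs₀' : s₀ ∈ Set.Ioc (0:ℝ) 1 := hIccsub r hr' hs₀
    have hωs₀ : 0 < ω s₀ := hωpos s₀ hs₀'
    have hsq₀ : 0 < Real.sqrt (W s₀) := hsqrtpos s₀ hs₀'
    have hratpos : 0 ≤ ω r / ω₁ r := div_nonneg (hωpos r hr').le (hω₁pos r hr').le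
    rw [Real.dist_eq, sub_zero, abs_of_nonneg hratpos, heq]
    have hform : ω r / f s₀ = ω r * (Real.sqrt (W s₀) / ω s₀) := by
      rw [hfdef]
      field_simp
    rw [hform]
    rcases le_or_gt s₀ δ₁ with hcase | hcase
    · have h1 : ω r ≤ ω s₀ := hωmono hr' hs₀' hs₀.1
      have h2 : Real.sqrt (W s₀) ≤ Real.sqrt (W δ₁) :=
        Real.sqrt_le_sqrt (hWmono (Set.Ioc_subset_Icc_self hs₀')
          (Set.Ioc_subset_Icc_self hδ₁mem) hcase)
      calc ω r * (Real.sqrt (W s₀) / ω s₀)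
          = ω r / ω s₀ * Real.sqrt (W s₀) := by ring
        _ ≤ 1 * Real.sqrt (W δ₁) := by
            apply mul_le_mul _ h2 hsq₀.le zero_le_one
            rw [div_le_one hωs₀]
            exact h1
        _ = Real.sqrt (W δ₁) := one_mul _
        _ < ε := hδ₁ε
    · have h1 : ω δ₁ ≤ ω s₀ := hωmono hδ₁mem hs₀' hcase.le
      have h2 : Real.sqrt (W s₀) ≤ Real.sqrt (W 1) :=
        Real.sqrt_le_sqrt (hWmono (Set.Ioc_subset_Icc_self hs₀')
          (Set.right_mem_Icc.2 zero_le_one) hs₀'.2)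
      calc ω r * (Real.sqrt (W s₀) / ω s₀)
          ≤ ω r * (Real.sqrt (W 1) / ω δ₁) := by
            apply mul_le_mul_of_nonneg_left _ (hωpos r hr').le
            exact div_le_div₀ hW1sq.le h2 hωδ₁ h1
        _ < (ε * ω δ₁ / Real.sqrt (W 1)) * (Real.sqrt (W 1) / ω δ₁) := by
            apply mul_lt_mul_of_pos_right hrK
            positivity
        _ = ε := by field_simp
  refine ⟨ω₁, (Real.sqrt (W 1))⁻¹, inv_pos.2 hW1sq, hω₁pos, hω₁mono, hω₁cont, ?_,
    hω₁dec, hω₁int, ?_⟩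
  · intro r hr
    have h := hcbound r hr
    rw [div_eq_inv_mul] at h
    exact h
  · apply squeeze_zero' (g := fun r => (ω r / ω₁ r) * ∫ t in Set.Ioc (0:ℝ) 1, ω₁ t / t)
    · filter_upwards [hmemIoc] with r hr
      apply mul_nonneg (div_nonneg (hωpos r hr).le (hω₁pos r hr).le)
      apply intervalIntegral.integral_nonneg hr.2
      intro u hu
      have hu' : u ∈ Set.Ioc (0:ℝ) 1 := ⟨lt_of_lt_of_le hr.1 hu.1, hu.2⟩
      exact div_nonneg (hω₁pos u hu').le hu'.1.le
    · filter_upwards [hmemIoc] with r hr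
      apply mul_le_mul_of_nonneg_left _ (div_nonneg (hωpos r hr).le (hω₁pos r hr).le)
      rw [intervalIntegral.integral_of_le hr.2]
      apply setIntegral_mono_set hω₁int
      · rw [EventuallyLE, ae_restrict_iff' measurableSet_Ioc]
        apply Filter.Eventually.of_forall
        intro x hx
        exact div_nonneg (hω₁pos x hx).le hx.1.le
      · exact HasSubset.Subset.eventuallyLE (Set.Ioc_subset_Ioc hr.1.le le_rfl)
    · have h := hratio.mul_const (∫ t in Set.Ioc (0:ℝ) 1, ω₁ t / t)
      simpa using h
end

section
/- Let δ > 0 and let σ̂ : (0,δ) → (0,∞) be a continuous increasing function such that the function r ↦ σ̂(r)/r is non-increasing on (0,δ). Then there exists a concave increasing function σ : (0,δ) → (0,∞) such that (1/2) σ(r) ≤ σ̂(r) ≤ σ(r) for every r ∈ (0,δ). -/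
theorem stmt18 (δ : ℝ) (hδ : 0 < δ) (σh : ℝ → ℝ)
    (hcont : ContinuousOn σh (Set.Ioo 0 δ))
    (hmono : StrictMonoOn σh (Set.Ioo 0 δ))
    (hpos : ∀ r ∈ Set.Ioo (0 : ℝ) δ, 0 < σh r)
    (hquasi : AntitoneOn (fun r => σh r / r) (Set.Ioo 0 δ)) :
    ∃ σ : ℝ → ℝ, ConcaveOn ℝ (Set.Ioo 0 δ) σ
      ∧ StrictMonoOn σ (Set.Ioo 0 δ)
      ∧ ∀ r ∈ Set.Ioo (0 : ℝ) δ, (1 / 2) * σ r ≤ σh r ∧ σh r ≤ σ r := by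
  classical
  set S : ℝ → Set ℝ := fun r => (fun t => σh t * (1 + r / t)) '' Set.Ioo 0 δ with hS
  set σ : ℝ → ℝ := fun r => sInf (S r) with hσ
  -- nonempty
  have hne : ∀ r : ℝ, (S r).Nonempty := fun r =>
    (Set.nonempty_Ioo.mpr hδ).image _
  -- lower bound : σh r ≤ every element of S r
  have hlb : ∀ r ∈ Set.Ioo (0:ℝ) δ, ∀ t ∈ Set.Ioo (0:ℝ) δ,
      σh r ≤ σh t * (1 + r / t) := by
    intro r hr t ht
    have hr0 : 0 < r := hr.1
    have ht0 : 0 < t := ht.1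
    have hσht : 0 < σh t := hpos t ht
    rcases le_or_gt r t with h | h
    · have h1 : σh r ≤ σh t := (hmono.monotoneOn) hr ht h
      have h2 : (0:ℝ) < r / t := div_pos hr0 ht0
      nlinarith
    · have h1 : σh r / r ≤ σh t / t := hquasi ht hr h.le
      have h2 : σh r * t ≤ σh t * r := by
        rw [div_le_div_iff₀ hr0 ht0] at h1; linarith
      have h3 : σh t * (1 + r / t) = (σh t * t + σh t * r) / t := by
        field_simp
      rw [h3, le_div_iff₀ ht0]
      nlinarith
  have hbdd : ∀ r ∈ Set.Ioo (0:ℝ) δ, BddBelow (S r) := by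
    intro r hr
    exact ⟨σh r, by rintro y ⟨t, ht, rfl⟩; exact hlb r hr t ht⟩
  have hσ_ge : ∀ r ∈ Set.Ioo (0:ℝ) δ, σh r ≤ σ r := by
    intro r hr
    exact le_csInf (hne r) (by rintro y ⟨t, ht, rfl⟩; exact hlb r hr t ht)
  have hσ_le : ∀ r ∈ Set.Ioo (0:ℝ) δ, σ r ≤ 2 * σh r := by
    intro r hr
    have hmem : σh r * (1 + r / r) ∈ S r := ⟨r, hr, rfl⟩
    have := csInf_le (hbdd r hr) hmem
    rw [div_self (ne_of_gt hr.1)] at this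
    linarith
  -- uniform slope lower bound
  set m : ℝ := σh (δ/2) / δ with hm
  have hδ2 : (δ/2) ∈ Set.Ioo (0:ℝ) δ := ⟨by linarith, by linarith⟩
  have hm0 : 0 < m := div_pos (hpos _ hδ2) hδ
  have hslope : ∀ t ∈ Set.Ioo (0:ℝ) δ, m ≤ σh t / t := by
    intro t ht
    have ht0 : 0 < t := ht.1
    rcases le_or_gt t (δ/2) with h | h
    · have h1 : σh t / t ≥ σh (δ/2) / (δ/2) := by
        rcases eq_or_lt_of_le h with h' | h'
        · rw [h']
        · exact hquasi ht hδ2 h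
      have h2 : σh (δ/2) / (δ/2) ≥ σh (δ/2) / δ :=
        div_le_div_of_nonneg_left (hpos _ hδ2).le (by linarith) (by linarith)
      linarith
    · have h1 : σh (δ/2) ≤ σh t := (hmono.monotoneOn) hδ2 ht h.le
      have h2 : σh (δ/2) / δ ≤ σh t / δ := by gcongr
      have h3 : σh t / δ ≤ σh t / t :=
        div_le_div_of_nonneg_left (hpos t ht).le ht0 ht.2.le
      linarith
  refine ⟨σ, ⟨convex_Ioo 0 δ, ?_⟩, ?_, ?_⟩
  · -- concavity
    intro x hx y hy a b ha hb hab
    have hxy : a • x + b • y ∈ Set.Ioo (0:ℝ) δ :=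
      (convex_Ioo (0:ℝ) δ) hx hy ha hb hab
    simp only [smul_eq_mul]
    apply le_csInf (hne _)
    rintro z ⟨t, ht, rfl⟩
    show a * σ x + b * σ y ≤ σh t * (1 + (a * x + b * y) / t)
    have ht0 : (t:ℝ) ≠ 0 := ne_of_gt ht.1
    have key : σh t * (1 + (a * x + b * y) / t)
        = a * (σh t * (1 + x / t)) + b * (σh t * (1 + y / t)) := by
      field_simp
      linear_combination (-(σh t * t)) * hab
    rw [key]
    have h1 : σ x ≤ σh t * (1 + x / t) := csInf_le (hbdd x hx) ⟨t, ht, rfl⟩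
    have h2 : σ y ≤ σh t * (1 + y / t) := csInf_le (hbdd y hy) ⟨t, ht, rfl⟩
    have := add_le_add (mul_le_mul_of_nonneg_left h1 ha)
      (mul_le_mul_of_nonneg_left h2 hb)
    linarith
  · -- strict mono
    intro x hx y hy hxy
    have key : σ x + m * (y - x) ≤ σ y := by
      apply le_csInf (hne y)
      rintro z ⟨t, ht, rfl⟩
      show σ x + m * (y - x) ≤ σh t * (1 + y / t)
      have ht0 : 0 < t := ht.1
      have h1 : σ x ≤ σh t * (1 + x / t) := csInf_le (hbdd x hx) ⟨t, ht, rfl⟩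
      have h2 : σh t * (1 + y / t) = σh t * (1 + x / t) + (σh t / t) * (y - x) := by
        field_simp; ring
      have h3 : m * (y - x) ≤ (σh t / t) * (y - x) :=
        mul_le_mul_of_nonneg_right (hslope t ht) (by linarith)
      rw [h2]; linarith
    have : 0 < m * (y - x) := mul_pos hm0 (by linarith)
    linarith
  · -- bounds
    intro r hr
    constructor
    · have := hσ_le r hr; linarith
    · exact hσ_ge r hr
end
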